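/- arXiv:2402.01942 — 5 statements merged into one kernel-verified Lean document; each statement's English description precedes it below -/
import Mathlib

section
/- ST_C({c}) = c · 2^(c−1) for every natural number c ≥ 2, where {c} denotes the singleton multiset containing c. (Fourth item of the paper's Lemma 'SortOneComponent': a single nontrivial crown of size c admits exactly c·2^(c−1) minimum-length sorting scenarios.) -/
def STN : Multiset ℕ → ℕ → ℕ
  | C, 0 =>
      if C = 0 then 1
      else (C.attach.map (fun c => 2 * c.1 * STN (C.erase c.1) c.1)).sum
  | C, (η + 1) =>
      STN C η + (C.attach.map (fun c => 2 * c.1 * STN (C.erase c.1) (η + 1 + c.1))).sum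
  termination_by C η => (Multiset.card C, η)
  decreasing_by
    · exact Prod.Lex.left _ _ (Multiset.card_erase_lt_of_mem c.2)
    · exact Prod.Lex.right _ (Nat.lt_succ_self η)
    · exact Prod.Lex.left _ _ (Multiset.card_erase_lt_of_mem c.2)

def STW : Multiset ℕ → ℕ → ℕ
  | _, 0 => 0
  | C, 1 =>
      if C = 0 then 1
      else (C.attach.map (fun c => 4 * c.1 * STW (C.erase c.1) (c.1 + 1))).sum
  | C, (w + 2) =>
      2 * STW C (w + 1) +
        (C.attach.map (fun c => 4 * c.1 * STW (C.erase c.1) (w + 2 + c.1))).sum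
  termination_by C w => (Multiset.card C, w)
  decreasing_by
    · exact Prod.Lex.left _ _ (Multiset.card_erase_lt_of_mem c.2)
    · exact Prod.Lex.right _ (Nat.lt_succ_self (w + 1))
    · exact Prod.Lex.left _ _ (Multiset.card_erase_lt_of_mem c.2)

def STC (C : Multiset ℕ) : ℕ :=
  (C.map (fun c => c * STW (C.erase c) c)).sum

def STMW : Multiset ℕ → ℕ → ℕ → ℕ
  | _, 0, _ => 0
  | _, _ + 1, 0 => 0
  | C, m + 1, w + 1 =>
      2 * STMW C (m + 1) w +
      (C.attach.map (fun c => 4 * c.1 * STMW (C.erase c.1) (m + 1) (w + 1 + c.1))).sum +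
      ∑ η ∈ Finset.range (m + 1),
        4 * (C.powerset.map (fun C' =>
              Nat.choose (C.sum + Multiset.card C + (m + 1) + (w + 1) - 1)
                  (C'.sum + Multiset.card C' + η) *
                STN C' η * STN (C - C') ((m + 1) + (w + 1) - η - 1))).sum
  termination_by C m w => (Multiset.card C, w)
  decreasing_by
    · exact Prod.Lex.right _ (Nat.lt_succ_self w)
    · exact Prod.Lex.left _ _ (Multiset.card_erase_lt_of_mem c.2)

def STM (C : Multiset ℕ) (m : ℕ) : ℕ :=
  (∑ η ∈ Finset.range m,
    (C.powerset.map (fun C' =>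
        Nat.choose (C.sum + Multiset.card C + m - 1) (C'.sum + Multiset.card C' + η) *
          STN C' η * STN (C - C') (m - η - 1))).sum) +
  (C.map (fun c => c * STMW (C.erase c) m c)).sum

lemma STW_zero (w : ℕ) : STW 0 (w + 1) = 2 ^ w := by
  induction w with
  | zero => simp [STW]
  | succ n ih => rw [show n + 1 + 1 = n + 2 from rfl, STW, ih]; simp [pow_succ, mul_comm]

/-- ST_C({c}) = c · 2^(c−1) for every c ≥ 2. -/
theorem STC_singleton (c : ℕ) (hc : 2 ≤ c) : STC {c} = c * 2 ^ (c - 1) := by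
  obtain ⟨k, rfl⟩ : ∃ k, c = k + 1 := ⟨c - 1, by omega⟩
  simp [STC, STW_zero]
end

section
/- For every finite multiset C of natural numbers all of whose elements are at least 2, and every natural number m ≥ 1, one has ST_M(C, m) = ST_W(C, m). (This is the M/W symmetry of the paper's Corollary 'mwsymmetry', expressed as an identity between the recursively defined counting functions: the expression defining ST_M satisfies the same values as the recurrence defining ST_W.) -/
namespace SCJ

lemma attach_sum (C : Multiset ℕ) (f : ℕ → ℕ) :
    (C.attach.map (fun c => f c.1)).sum = (C.map f).sum := by
  conv_rhs => rw [← Multiset.attach_map_val C, Multiset.map_map]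
  rfl

lemma erase_cons (a x : ℕ) (s : Multiset ℕ) (h : x ∈ s) :
    (a ::ₘ s).erase x = a ::ₘ (s.erase x) := by
  rcases eq_or_ne x a with rfl|hx
  · simp [Multiset.cons_erase h]
  · exact Multiset.erase_cons_tail _ (by omega)

lemma map_finsum {α : Type*} (C : Multiset α) (s : Finset ℕ) (f : ℕ → α → ℕ) :
    (C.map (fun d => ∑ η ∈ s, f η d)).sum = ∑ η ∈ s, (C.map (f η)).sum := by
  induction C using Multiset.induction_on with
  | empty => simp
  | cons a t ih => simp [ih, Finset.sum_add_distrib]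

lemma powerset_compl (C : Multiset ℕ) (f : Multiset ℕ → ℕ) :
    ((C.powerset).map f).sum = ((C.powerset).map (fun t => f (C - t))).sum := by
  induction C using Multiset.induction_on generalizing f with
  | empty => simp
  | cons a s ih =>
    rw [Multiset.powerset_cons]
    simp only [Multiset.map_add, Multiset.sum_add, Multiset.map_map]
    have h1 : (s.powerset.map (fun t => f (a ::ₘ s - t))).sum
        = (s.powerset.map (fun t => f (a ::ₘ (s - t)))).sum := by
      refine congrArg Multiset.sum (Multiset.map_congr rfl ?_)
      intro t ht
      rw [Multiset.cons_sub_of_le a ((Multiset.mem_powerset).1 ht)]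
    have h2 : (s.powerset.map ((fun t => f (a ::ₘ s - t)) ∘ Multiset.cons a)).sum
        = (s.powerset.map (fun t => f (s - t))).sum := by
      refine congrArg Multiset.sum (Multiset.map_congr rfl ?_)
      intro t ht
      simp only [Function.comp_apply]
      rw [Multiset.sub_cons, Multiset.erase_cons_head]
    have h3 : (s.powerset.map (f ∘ Multiset.cons a)).sum
        = (s.powerset.map (fun t => f (a ::ₘ (s - t)))).sum := ih (fun u => f (a ::ₘ u))
    rw [h1, h2, ← ih f, h3]
    ring

lemma exchange (C : Multiset ℕ) (g : ℕ → Multiset ℕ → Multiset ℕ → ℕ) :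
    ((C.powerset).map (fun t => (t.map (fun d => g d (t.erase d) (C - t))).sum)).sum
      = (C.map (fun d => (((C.erase d).powerset).map (fun E => g d E ((C.erase d) - E))).sum)).sum := by
  induction C using Multiset.induction_on generalizing g with
  | empty => simp
  | cons a s ih =>
    rw [Multiset.powerset_cons]
    simp only [Multiset.map_add, Multiset.sum_add, Multiset.map_map, Multiset.map_cons,
      Multiset.sum_cons, Multiset.erase_cons_head]
    have hL1 : (s.powerset.map (fun t => (t.map (fun d => g d (t.erase d) (a ::ₘ s - t))).sum)).sum
        = (s.powerset.map (fun t => (t.map (fun d => g d (t.erase d) (a ::ₘ (s - t)))).sum)).sum := by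
      refine congrArg Multiset.sum (Multiset.map_congr rfl ?_)
      intro t ht
      rw [Multiset.cons_sub_of_le a ((Multiset.mem_powerset).1 ht)]
    have hL2 : (s.powerset.map ((fun t => (t.map (fun d => g d (t.erase d) (a ::ₘ s - t))).sum) ∘ Multiset.cons a)).sum
        = (s.powerset.map (fun t => g a t (s - t))).sum
          + (s.powerset.map (fun t => (t.map (fun d => g d (a ::ₘ t.erase d) (s - t))).sum)).sum := by
      rw [← Multiset.sum_map_add]
      refine congrArg Multiset.sum (Multiset.map_congr rfl ?_)
      intro t ht
      simp only [Function.comp_apply, Multiset.map_cons, Multiset.sum_cons,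
        Multiset.erase_cons_head]
      rw [Multiset.sub_cons, Multiset.erase_cons_head]
      congr 1
      refine congrArg Multiset.sum (Multiset.map_congr rfl ?_)
      intro d hd
      rw [erase_cons a d t hd]
    have hR : (s.map (fun d => (((a ::ₘ s).erase d).powerset.map
          (fun E => g d E (((a ::ₘ s).erase d) - E))).sum)).sum
        = (s.map (fun d => ((s.erase d).powerset.map (fun E => g d E (a ::ₘ ((s.erase d) - E)))).sum)).sum
            + (s.map (fun d => ((s.erase d).powerset.map (fun E => g d (a ::ₘ E) ((s.erase d) - E))).sum)).sum := by
      rw [← Multiset.sum_map_add]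
      refine congrArg Multiset.sum (Multiset.map_congr rfl ?_)
      intro d hd
      rw [erase_cons a d s hd, Multiset.powerset_cons]
      simp only [Multiset.map_add, Multiset.sum_add, Multiset.map_map]
      congr 1
      · refine congrArg Multiset.sum (Multiset.map_congr rfl ?_)
        intro E hE
        rw [Multiset.cons_sub_of_le a ((Multiset.mem_powerset).1 hE)]
      · refine congrArg Multiset.sum (Multiset.map_congr rfl ?_)
        intro E hE
        simp only [Function.comp_apply]
        rw [Multiset.sub_cons, Multiset.erase_cons_head]
    have I1 : (s.powerset.map (fun t => (t.map (fun d => g d (t.erase d) (a ::ₘ (s - t)))).sum)).sum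
        = (s.map (fun d => ((s.erase d).powerset.map (fun E => g d E (a ::ₘ ((s.erase d) - E)))).sum)).sum :=
      ih (fun d E F => g d E (a ::ₘ F))
    have I2 : (s.powerset.map (fun t => (t.map (fun d => g d (a ::ₘ t.erase d) (s - t))).sum)).sum
        = (s.map (fun d => ((s.erase d).powerset.map (fun E => g d (a ::ₘ E) ((s.erase d) - E))).sum)).sum :=
      ih (fun d E F => g d (a ::ₘ E) F)
    rw [hL1, hL2, hR, I1, I2]
    ring


lemma sub_sub_self' (C t : Multiset ℕ) (h : t ≤ C) : C - (C - t) = t :=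
  tsub_tsub_cancel_of_le h

/-- E2' : exchange with the member from the complement -/
lemma exchange' (C : Multiset ℕ) (g : ℕ → Multiset ℕ → Multiset ℕ → ℕ) :
    ((C.powerset).map (fun t => ((C - t).map (fun d => g d t ((C - t).erase d))).sum)).sum
      = (C.map (fun d => (((C.erase d).powerset).map (fun t => g d t ((C.erase d) - t))).sum)).sum := by
  rw [powerset_compl C (fun t => ((C - t).map (fun d => g d t ((C - t).erase d))).sum)]
  have step1 : ((C.powerset).map (fun t => ((C - (C - t)).map (fun d => g d (C - t) ((C - (C - t)).erase d))).sum)).sum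
      = ((C.powerset).map (fun t => (t.map (fun d => g d (C - t) (t.erase d))).sum)).sum := by
    refine congrArg Multiset.sum (Multiset.map_congr rfl ?_)
    intro t ht
    rw [sub_sub_self' C t ((Multiset.mem_powerset).1 ht)]
  rw [step1, exchange C (fun d E F => g d F E)]
  refine congrArg Multiset.sum (Multiset.map_congr rfl ?_)
  intro d hd
  rw [powerset_compl (C.erase d) (fun E => g d ((C.erase d) - E) E)]
  refine congrArg Multiset.sum (Multiset.map_congr rfl ?_)
  intro E hE
  rw [sub_sub_self' _ E ((Multiset.mem_powerset).1 hE)]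

/-- E3 : member-member exchange -/
lemma exchange2 (C : Multiset ℕ) (f : ℕ → ℕ → ℕ) :
    (C.map (fun c => ((C.erase c).map (fun d => f c d)).sum)).sum
      = (C.map (fun d => ((C.erase d).map (fun c => f c d)).sum)).sum := by
  induction C using Multiset.induction_on generalizing f with
  | empty => simp
  | cons a s ih =>
    simp only [Multiset.map_cons, Multiset.sum_cons, Multiset.erase_cons_head]
    have h1 : (s.map (fun c => (((a ::ₘ s).erase c).map (fun d => f c d)).sum)).sum
        = (s.map (fun c => f c a)).sum + (s.map (fun c => ((s.erase c).map (fun d => f c d)).sum)).sum := by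
      rw [← Multiset.sum_map_add]
      refine congrArg Multiset.sum (Multiset.map_congr rfl ?_)
      intro c hc
      rw [erase_cons a c s hc]
      simp [Nat.add_comm]
    have h2 : (s.map (fun d => (((a ::ₘ s).erase d).map (fun c => f c d)).sum)).sum
        = (s.map (fun d => f a d)).sum + (s.map (fun d => ((s.erase d).map (fun c => f c d)).sum)).sum := by
      rw [← Multiset.sum_map_add]
      refine congrArg Multiset.sum (Multiset.map_congr rfl ?_)
      intro d hd
      rw [erase_cons a d s hd]
      simp [Nat.add_comm]
    rw [h1, h2, ih f]
    ring

lemma le_parts {C t : Multiset ℕ} (h : t ≤ C) :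
    t.sum + (C - t).sum = C.sum ∧ Multiset.card t + Multiset.card (C - t) = Multiset.card C := by
  obtain ⟨u, rfl⟩ := Multiset.le_iff_exists_add.1 h
  constructor
  · rw [Multiset.sum_add]; congr 1; rw [add_tsub_cancel_left]
  · rw [Multiset.card_add]; congr 1; rw [add_tsub_cancel_left]

/-- uniform recursion for STN -/
lemma STN_rec (C : Multiset ℕ) (a : ℕ) :
    STN C a = (if a = 0 then (if C = 0 then 1 else 0) else STN C (a - 1))
      + (C.map (fun d => 2 * d * STN (C.erase d) (a + d))).sum := by
  cases a with
  | zero =>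
    rw [STN]
    rcases eq_or_ne C 0 with rfl|hC
    · simp
    · simp only [hC, if_false, if_true]
      rw [attach_sum C (fun d => 2 * d * STN (C.erase d) d)]
      simp [Nat.zero_add]
  | succ η =>
    rw [STN]
    simp only [Nat.succ_ne_zero, if_false, Nat.add_sub_cancel]
    rw [attach_sum C (fun d => 2 * d * STN (C.erase d) (η + 1 + d))]

/-- the binomial-STN kernel -/
def bk (C : Multiset ℕ) (k η : ℕ) : ℕ :=
  ((C.powerset).map (fun t =>
    Nat.choose (C.sum + Multiset.card C + k - 1) (t.sum + Multiset.card t + η)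
      * STN t η * STN (C - t) (k - η - 1))).sum

def Bi (C : Multiset ℕ) (k lo hi : ℕ) : ℕ := ∑ η ∈ Finset.Ico lo hi, bk C k η

lemma Bi_zero (C : Multiset ℕ) (k lo : ℕ) : Bi C k lo lo = 0 := by simp [Bi]

lemma Bi_split (C : Multiset ℕ) (k lo mid hi : ℕ) (h1 : lo ≤ mid) (h2 : mid ≤ hi) :
    Bi C k lo mid + Bi C k mid hi = Bi C k lo hi := by
  simp only [Bi]
  rw [Finset.sum_Ico_consecutive _ h1 h2]

lemma Bi_succ (C : Multiset ℕ) (k lo hi : ℕ) (h : lo ≤ hi) :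
    Bi C k lo (hi+1) = Bi C k lo hi + bk C k hi := by
  simp only [Bi]
  rw [Finset.sum_Ico_succ_top h]

lemma bk_refl (C : Multiset ℕ) (k η : ℕ) (hη : η < k) :
    bk C k η = bk C k (k - η - 1) := by
  unfold bk
  rw [powerset_compl C (fun t =>
    Nat.choose (C.sum + Multiset.card C + k - 1) (t.sum + Multiset.card t + η)
      * STN t η * STN (C - t) (k - η - 1))]
  refine congrArg Multiset.sum (Multiset.map_congr rfl ?_)
  intro t ht
  have hle := (Multiset.mem_powerset).1 ht
  obtain ⟨hs, hc⟩ := le_parts hle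
  rw [sub_sub_self' C t hle]
  have harg : k - (k - η - 1) - 1 = η := by omega
  rw [harg]
  have hbin : Nat.choose (C.sum + Multiset.card C + k - 1) ((C - t).sum + Multiset.card (C - t) + η)
      = Nat.choose (C.sum + Multiset.card C + k - 1) (t.sum + Multiset.card t + (k - η - 1)) := by
    have h1 : (C - t).sum + Multiset.card (C - t) + η
        = (C.sum + Multiset.card C + k - 1) - (t.sum + Multiset.card t + (k - η - 1)) := by omega
    rw [h1]
    exact Nat.choose_symm (by omega)
  rw [hbin]
  ring

lemma Int_refl (C : Multiset ℕ) (k lo hi : ℕ) (hlo : lo ≤ hi) (hhi : hi ≤ k) :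
    Bi C k lo hi = Bi C k (k - hi) (k - lo) := by
  simp only [Bi]
  refine Finset.sum_nbij' (fun η => k - 1 - η) (fun η => k - 1 - η) ?_ ?_ ?_ ?_ ?_ <;>
    intro a ha <;> simp only [Finset.mem_Ico] at * <;> beta_reduce
  · omega
  · omega
  · omega
  · omega
  · have := bk_refl C k a (by omega)
    rw [this]
    congr 1
    omega

lemma pascal (n x : ℕ) (hn : 1 ≤ n) :
    n.choose x = (if x = 0 then 0 else (n-1).choose (x-1)) + (n-1).choose x := by
  cases n with
  | zero => omega
  | succ n' =>
    cases x with
    | zero => simp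
    | succ x' => simp [Nat.choose_succ_succ, Nat.add_comm]

lemma erase_parts {C : Multiset ℕ} {d : ℕ} (h : d ∈ C) :
    (C.erase d).sum + d = C.sum ∧ Multiset.card (C.erase d) + 1 = Multiset.card C := by
  have hc := Multiset.cons_erase h
  constructor
  · conv_rhs => rw [← hc]
    rw [Multiset.sum_cons]; ring
  · conv_rhs => rw [← hc]
    rw [Multiset.card_cons]

lemma mul_map_sum (a b : ℕ) (m : Multiset ℕ) (f : ℕ → ℕ) :
    a * (m.map f).sum * b = (m.map (fun d => a * f d * b)).sum := by
  induction m using Multiset.induction_on with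
  | empty => simp
  | cons x s ih => simp only [Multiset.map_cons, Multiset.sum_cons, ← ih]; ring

lemma mul_map_sum' (a b : ℕ) (m : Multiset ℕ) (f : ℕ → ℕ) :
    a * b * (m.map f).sum = (m.map (fun d => a * b * f d)).sum := by
  induction m using Multiset.induction_on with
  | empty => simp
  | cons x s ih => simp only [Multiset.map_cons, Multiset.sum_cons, ← ih]; ring

lemma bk_rec (C : Multiset ℕ) (k η : ℕ) (hη : η < k) (hn : C ≠ 0 ∨ 2 ≤ k) :
    bk C k η = (if η = 0 then 0 else bk C (k-1) (η-1))
      + (if η = k-1 then 0 else bk C (k-1) η)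
      + (C.map (fun d => 2 * d * (bk (C.erase d) (k+d) (η+d) + bk (C.erase d) (k+d) η))).sum := by
  have hN1 : 1 ≤ C.sum + Multiset.card C + k - 1 := by
    rcases hn with h | h
    · have : 0 < Multiset.card C := Multiset.card_pos.2 h
      omega
    · omega
  -- step 0 : Pascal split
  have step0 : bk C k η
      = ((C.powerset).map (fun t =>
          (if t.sum + Multiset.card t + η = 0 then 0
            else (C.sum + Multiset.card C + k - 1 - 1).choose (t.sum + Multiset.card t + η - 1))
          * STN t η * STN (C - t) (k - η - 1))).sum
      + ((C.powerset).map (fun t =>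
          (C.sum + Multiset.card C + k - 1 - 1).choose (t.sum + Multiset.card t + η)
          * STN t η * STN (C - t) (k - η - 1))).sum := by
    unfold bk
    rw [← Multiset.sum_map_add]
    refine congrArg Multiset.sum (Multiset.map_congr rfl ?_)
    intro t ht
    rw [pascal _ _ hN1]
    ring
  -- P1 split by STN_rec on first factor
  have stepP1 : ((C.powerset).map (fun t =>
          (if t.sum + Multiset.card t + η = 0 then 0
            else (C.sum + Multiset.card C + k - 1 - 1).choose (t.sum + Multiset.card t + η - 1))
          * STN t η * STN (C - t) (k - η - 1))).sum
      = ((C.powerset).map (fun t =>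
          (if t.sum + Multiset.card t + η = 0 then 0
            else (C.sum + Multiset.card C + k - 1 - 1).choose (t.sum + Multiset.card t + η - 1))
          * (if η = 0 then (if t = 0 then 1 else 0) else STN t (η - 1)) * STN (C - t) (k - η - 1))).sum
      + ((C.powerset).map (fun t =>
          (if t.sum + Multiset.card t + η = 0 then 0
            else (C.sum + Multiset.card C + k - 1 - 1).choose (t.sum + Multiset.card t + η - 1))
          * (t.map (fun d => 2 * d * STN (t.erase d) (η + d))).sum * STN (C - t) (k - η - 1))).sum := by
    rw [← Multiset.sum_map_add]
    refine congrArg Multiset.sum (Multiset.map_congr rfl ?_)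
    intro t ht
    conv_lhs => rw [STN_rec t η]
    ring
  -- P1I
  have stepP1I : ((C.powerset).map (fun t =>
          (if t.sum + Multiset.card t + η = 0 then 0
            else (C.sum + Multiset.card C + k - 1 - 1).choose (t.sum + Multiset.card t + η - 1))
          * (if η = 0 then (if t = 0 then 1 else 0) else STN t (η - 1)) * STN (C - t) (k - η - 1))).sum
      = if η = 0 then 0 else bk C (k-1) (η-1) := by
    by_cases hη0 : η = 0
    · subst hη0
      simp only [if_true, eq_self_iff_true]
      have : ((C.powerset).map (fun t =>
          (if t.sum + Multiset.card t + 0 = 0 then 0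
            else (C.sum + Multiset.card C + k - 1 - 1).choose (t.sum + Multiset.card t + 0 - 1))
          * (if t = 0 then 1 else 0) * STN (C - t) (k - 0 - 1))).sum
          = ((C.powerset).map (fun _ => 0)).sum := by
        refine congrArg Multiset.sum (Multiset.map_congr rfl ?_)
        intro t ht
        rcases eq_or_ne t 0 with rfl | h0
        · simp
        · simp [h0]
      rw [this]
      simp
    · rw [if_neg hη0]
      unfold bk
      refine congrArg Multiset.sum (Multiset.map_congr rfl ?_)
      intro t ht
      rw [if_neg hη0, if_neg (by omega)]
      have e1 : C.sum + Multiset.card C + k - 1 - 1 = C.sum + Multiset.card C + (k-1) - 1 := by omega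
      have e2 : t.sum + Multiset.card t + η - 1 = t.sum + Multiset.card t + (η-1) := by omega
      have e3 : k - η - 1 = (k-1) - (η-1) - 1 := by omega
      rw [e1, e2, e3]
  -- P1S via exchange
  have stepP1S : ((C.powerset).map (fun t =>
          (if t.sum + Multiset.card t + η = 0 then 0
            else (C.sum + Multiset.card C + k - 1 - 1).choose (t.sum + Multiset.card t + η - 1))
          * (t.map (fun d => 2 * d * STN (t.erase d) (η + d))).sum * STN (C - t) (k - η - 1))).sum
      = (C.map (fun d => 2 * d * bk (C.erase d) (k+d) (η+d))).sum := by
    have h1 : ((C.powerset).map (fun t =>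
          (if t.sum + Multiset.card t + η = 0 then 0
            else (C.sum + Multiset.card C + k - 1 - 1).choose (t.sum + Multiset.card t + η - 1))
          * (t.map (fun d => 2 * d * STN (t.erase d) (η + d))).sum * STN (C - t) (k - η - 1))).sum
        = ((C.powerset).map (fun t => (t.map (fun d => 2 * d *
              ((C.sum + Multiset.card C + k - 1 - 1).choose ((t.erase d).sum + Multiset.card (t.erase d) + (η + d))
                * STN (t.erase d) (η + d) * STN (C - t) (k - η - 1)))).sum)).sum := by
      refine congrArg Multiset.sum (Multiset.map_congr rfl ?_)
      intro t ht
      rw [mul_map_sum]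
      refine congrArg Multiset.sum (Multiset.map_congr rfl ?_)
      intro d hd
      obtain ⟨hs, hc⟩ := erase_parts hd
      rw [if_neg (by omega)]
      have e2 : t.sum + Multiset.card t + η - 1
          = (t.erase d).sum + Multiset.card (t.erase d) + (η + d) := by omega
      rw [e2]
      ring
    have hex := exchange C (fun (d : ℕ) (E F : Multiset ℕ) => 2 * d *
              ((C.sum + Multiset.card C + k - 1 - 1).choose (E.sum + Multiset.card E + (η + d))
                * STN E (η + d) * STN F (k - η - 1)))
    beta_reduce at hex
    rw [h1, hex]
    refine congrArg Multiset.sum (Multiset.map_congr rfl ?_)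
    intro d hd
    obtain ⟨hs, hc⟩ := erase_parts hd
    have h2 : (((C.erase d).powerset).map (fun E => 2 * d *
              ((C.sum + Multiset.card C + k - 1 - 1).choose (E.sum + Multiset.card E + (η + d))
                * STN E (η + d) * STN ((C.erase d) - E) (k - η - 1)))).sum
        = 2 * d * (((C.erase d).powerset).map (fun E =>
              ((C.erase d).sum + Multiset.card (C.erase d) + (k+d) - 1).choose (E.sum + Multiset.card E + (η + d))
                * STN E (η + d) * STN ((C.erase d) - E) ((k+d) - (η+d) - 1))).sum := by
      rw [Multiset.sum_map_mul_left]
      congr 1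
      refine congrArg Multiset.sum (Multiset.map_congr rfl ?_)
      intro E hE
      have e1 : (C.erase d).sum + Multiset.card (C.erase d) + (k+d) - 1
          = C.sum + Multiset.card C + k - 1 - 1 := by omega
      have e3 : (k+d) - (η+d) - 1 = k - η - 1 := by omega
      rw [e1, e3]
    rw [h2]
    rfl
  -- P2 split by STN_rec on second factor
  have stepP2 : ((C.powerset).map (fun t =>
          (C.sum + Multiset.card C + k - 1 - 1).choose (t.sum + Multiset.card t + η)
          * STN t η * STN (C - t) (k - η - 1))).sum
      = ((C.powerset).map (fun t =>
          (C.sum + Multiset.card C + k - 1 - 1).choose (t.sum + Multiset.card t + η)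
          * STN t η * (if k - η - 1 = 0 then (if C - t = 0 then 1 else 0) else STN (C - t) (k - η - 1 - 1)))).sum
      + ((C.powerset).map (fun t =>
          (C.sum + Multiset.card C + k - 1 - 1).choose (t.sum + Multiset.card t + η)
          * STN t η * ((C - t).map (fun d => 2 * d * STN ((C - t).erase d) (k - η - 1 + d))).sum)).sum := by
    rw [← Multiset.sum_map_add]
    refine congrArg Multiset.sum (Multiset.map_congr rfl ?_)
    intro t ht
    conv_lhs => rw [STN_rec (C - t) (k - η - 1)]
    ring
  -- P2a
  have stepP2a : ((C.powerset).map (fun t =>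
          (C.sum + Multiset.card C + k - 1 - 1).choose (t.sum + Multiset.card t + η)
          * STN t η * (if k - η - 1 = 0 then (if C - t = 0 then 1 else 0) else STN (C - t) (k - η - 1 - 1)))).sum
      = if η = k-1 then 0 else bk C (k-1) η := by
    by_cases hηk : η = k - 1
    · rw [if_pos hηk]
      have : ((C.powerset).map (fun t =>
          (C.sum + Multiset.card C + k - 1 - 1).choose (t.sum + Multiset.card t + η)
          * STN t η * (if k - η - 1 = 0 then (if C - t = 0 then 1 else 0) else STN (C - t) (k - η - 1 - 1)))).sum
          = ((C.powerset).map (fun _ => 0)).sum := by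
        refine congrArg Multiset.sum (Multiset.map_congr rfl ?_)
        intro t ht
        rw [if_pos (by omega)]
        rcases eq_or_ne (C - t) 0 with h0 | h0
        · have htC : t = C := by
            have hle := (Multiset.mem_powerset).1 ht
            have : C ≤ t := tsub_eq_zero_iff_le.1 h0
            exact le_antisymm hle this
          subst htC
          rw [if_pos h0]
          have : t.sum + Multiset.card t + η = t.sum + Multiset.card t + k - 1 := by omega
          rw [this, Nat.choose_eq_zero_of_lt (by omega)]
          ring
        · rw [if_neg h0]; ring
      rw [this]; simp
    · rw [if_neg hηk]
      unfold bk
      refine congrArg Multiset.sum (Multiset.map_congr rfl ?_)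
      intro t ht
      rw [if_neg (by omega)]
      have e1 : C.sum + Multiset.card C + k - 1 - 1 = C.sum + Multiset.card C + (k-1) - 1 := by omega
      have e3 : k - η - 1 - 1 = (k-1) - η - 1 := by omega
      rw [e1, e3]
  -- P2b via exchange'
  have stepP2b : ((C.powerset).map (fun t =>
          (C.sum + Multiset.card C + k - 1 - 1).choose (t.sum + Multiset.card t + η)
          * STN t η * ((C - t).map (fun d => 2 * d * STN ((C - t).erase d) (k - η - 1 + d))).sum)).sum
      = (C.map (fun d => 2 * d * bk (C.erase d) (k+d) η)).sum := by
    have h1 : ((C.powerset).map (fun t =>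
          (C.sum + Multiset.card C + k - 1 - 1).choose (t.sum + Multiset.card t + η)
          * STN t η * ((C - t).map (fun d => 2 * d * STN ((C - t).erase d) (k - η - 1 + d))).sum)).sum
        = ((C.powerset).map (fun t => ((C - t).map (fun d =>
              (C.sum + Multiset.card C + k - 1 - 1).choose (t.sum + Multiset.card t + η)
              * STN t η * (2 * d * STN ((C - t).erase d) (k - η - 1 + d)))).sum)).sum := by
      refine congrArg Multiset.sum (Multiset.map_congr rfl ?_)
      intro t ht
      rw [mul_map_sum']
    have hex := exchange' C (fun (d : ℕ) (t F : Multiset ℕ) =>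
              (C.sum + Multiset.card C + k - 1 - 1).choose (t.sum + Multiset.card t + η)
              * STN t η * (2 * d * STN F (k - η - 1 + d)))
    beta_reduce at hex
    rw [h1, hex]
    refine congrArg Multiset.sum (Multiset.map_congr rfl ?_)
    intro d hd
    obtain ⟨hs, hc⟩ := erase_parts hd
    have h2 : (((C.erase d).powerset).map (fun t =>
              (C.sum + Multiset.card C + k - 1 - 1).choose (t.sum + Multiset.card t + η)
              * STN t η * (2 * d * STN ((C.erase d) - t) (k - η - 1 + d)))).sum
        = 2 * d * (((C.erase d).powerset).map (fun t =>
              ((C.erase d).sum + Multiset.card (C.erase d) + (k+d) - 1).choose (t.sum + Multiset.card t + η)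
                * STN t η * STN ((C.erase d) - t) ((k+d) - η - 1))).sum := by
      have h2a : (((C.erase d).powerset).map (fun t =>
              (C.sum + Multiset.card C + k - 1 - 1).choose (t.sum + Multiset.card t + η)
              * STN t η * (2 * d * STN ((C.erase d) - t) (k - η - 1 + d)))).sum
          = (((C.erase d).powerset).map (fun t => 2 * d *
              (((C.erase d).sum + Multiset.card (C.erase d) + (k+d) - 1).choose (t.sum + Multiset.card t + η)
                * STN t η * STN ((C.erase d) - t) ((k+d) - η - 1)))).sum := by
        refine congrArg Multiset.sum (Multiset.map_congr rfl ?_)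
        intro E hE
        have e1 : (C.erase d).sum + Multiset.card (C.erase d) + (k+d) - 1
            = C.sum + Multiset.card C + k - 1 - 1 := by omega
        have e3 : (k+d) - η - 1 = k - η - 1 + d := by omega
        rw [e1, e3]
        ring
      rw [h2a, Multiset.sum_map_mul_left]
    rw [h2]
    rfl
  -- assemble
  rw [step0, stepP1, stepP1I, stepP1S, stepP2, stepP2a, stepP2b]
  have final : (C.map (fun d => 2 * d * bk (C.erase d) (k+d) (η+d))).sum
      + (C.map (fun d => 2 * d * bk (C.erase d) (k+d) η)).sum
      = (C.map (fun d => 2 * d * (bk (C.erase d) (k+d) (η+d) + bk (C.erase d) (k+d) η))).sum := by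
    rw [← Multiset.sum_map_add]
    refine congrArg Multiset.sum (Multiset.map_congr rfl ?_)
    intro d hd
    ring
  rw [← final]
  ring

lemma sum_if_shift (a : ℕ) (g : ℕ → ℕ) :
    ∑ η ∈ Finset.Ico 0 a, (if η = 0 then 0 else g (η-1)) = ∑ η ∈ Finset.Ico 0 (a-1), g η := by
  cases a with
  | zero => simp
  | succ n =>
    rw [show Finset.Ico 0 (n+1) = Finset.range (n+1) from by rw [Finset.range_eq_Ico]]
    rw [show Finset.Ico 0 (n+1-1) = Finset.range n from by rw [Finset.range_eq_Ico]; congr 1]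
    rw [Finset.sum_range_succ']
    simp

lemma sum_if_top (a k : ℕ) (g : ℕ → ℕ) (ha : 1 ≤ a) (hak : a ≤ k) :
    ∑ η ∈ Finset.Ico 0 a, (if η = k-1 then 0 else g η) = ∑ η ∈ Finset.Ico 0 (min a (k-1)), g η := by
  by_cases h : a ≤ k - 1
  · rw [min_eq_left h]
    refine Finset.sum_congr rfl ?_
    intro η hη
    simp only [Finset.mem_Ico] at hη
    rw [if_neg (by omega)]
  · have hk : a = k := by omega
    subst hk
    rw [min_eq_right (by omega)]
    rw [show a = (a-1)+1 by omega, Finset.sum_Ico_succ_top (by omega)]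
    rw [if_pos (by omega), add_zero]
    rw [show (a-1)+1-1 = a-1 by omega]
    refine Finset.sum_congr rfl ?_
    intro η hη
    simp only [Finset.mem_Ico] at hη
    rw [if_neg (by omega)]

lemma Ico_shift (a d : ℕ) (f : ℕ → ℕ) :
    ∑ η ∈ Finset.Ico 0 a, f (η + d) = ∑ η ∈ Finset.Ico d (a+d), f η := by
  rw [Finset.sum_Ico_eq_sum_range]
  conv_rhs => rw [Finset.sum_Ico_eq_sum_range]
  rw [show a + d - d = a by omega, show a - 0 = a by omega]
  refine Finset.sum_congr rfl ?_
  intro η hη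
  congr 1
  omega

lemma BREC (C : Multiset ℕ) (k a : ℕ) (ha : 1 ≤ a) (hak : a ≤ k) (hn : C ≠ 0 ∨ 2 ≤ k) :
    Bi C k 0 a = Bi C (k-1) 0 (a-1) + Bi C (k-1) 0 (min a (k-1))
      + (C.map (fun d => 2 * d * (Bi (C.erase d) (k+d) d (a+d) + Bi (C.erase d) (k+d) 0 a))).sum := by
  unfold Bi
  have h1 : ∑ η ∈ Finset.Ico 0 a, bk C k η
      = ∑ η ∈ Finset.Ico 0 a, ((if η = 0 then 0 else bk C (k-1) (η-1))
        + (if η = k-1 then 0 else bk C (k-1) η)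
        + (C.map (fun d => 2 * d * (bk (C.erase d) (k+d) (η+d) + bk (C.erase d) (k+d) η))).sum) := by
    refine Finset.sum_congr rfl ?_
    intro η hη
    simp only [Finset.mem_Ico] at hη
    exact bk_rec C k η (by omega) hn
  rw [h1]
  simp only [Finset.sum_add_distrib]
  rw [sum_if_shift a (fun η => bk C (k-1) η), sum_if_top a k (fun η => bk C (k-1) η) ha hak]
  congr 1
  rw [← map_finsum C (Finset.Ico 0 a)
    (fun η d => 2 * d * (bk (C.erase d) (k+d) (η+d) + bk (C.erase d) (k+d) η))]
  refine congrArg Multiset.sum (Multiset.map_congr rfl ?_)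
  intro d hd
  rw [← Finset.mul_sum, Finset.sum_add_distrib]
  congr 2
  · exact Ico_shift a d (fun η => bk (C.erase d) (k+d) η)

lemma STMW_zero_left (C : Multiset ℕ) (w : ℕ) : STMW C 0 w = 0 := by
  rw [STMW]

lemma STMW_zero_right (C : Multiset ℕ) (m : ℕ) : STMW C m 0 = 0 := by
  cases m with
  | zero => rw [STMW]
  | succ m' => rw [STMW]

lemma STMW_rec (C : Multiset ℕ) (m w : ℕ) (hm : 1 ≤ m) (hw : 1 ≤ w) :
    STMW C m w = 2 * STMW C m (w-1)
      + (C.map (fun c => 4 * c * STMW (C.erase c) m (w+c))).sum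
      + 4 * Bi C (m+w) 0 m := by
  obtain ⟨m', rfl⟩ : ∃ m', m = m' + 1 := ⟨m-1, by omega⟩
  obtain ⟨w', rfl⟩ : ∃ w', w = w' + 1 := ⟨w-1, by omega⟩
  rw [STMW]
  rw [attach_sum C (fun c => 4 * c * STMW (C.erase c) (m'+1) (w' + 1 + c))]
  have harg : (C.map (fun c => 4 * c * STMW (C.erase c) (m'+1) (w' + 1 + c))).sum
      = (C.map (fun c => 4 * c * STMW (C.erase c) (m'+1) (w' + 1 + c))).sum := rfl
  have hD : (∑ η ∈ Finset.range (m' + 1),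
        4 * (C.powerset.map (fun C' =>
              Nat.choose (C.sum + Multiset.card C + (m' + 1) + (w' + 1) - 1)
                  (C'.sum + Multiset.card C' + η) *
                STN C' η * STN (C - C') ((m' + 1) + (w' + 1) - η - 1))).sum)
      = 4 * Bi C ((m'+1) + (w'+1)) 0 (m'+1) := by
    unfold Bi
    rw [← Finset.range_eq_Ico, Finset.mul_sum]
    refine Finset.sum_congr rfl ?_
    intro η hη
    congr 1
    unfold bk
    refine congrArg Multiset.sum (Multiset.map_congr rfl ?_)
    intro t ht
    rw [show C.sum + Multiset.card C + (m'+1) + (w'+1) - 1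
        = C.sum + Multiset.card C + (m'+1+(w'+1)) - 1 from by omega]
  rw [hD]
  simp only [Nat.add_sub_cancel]

def Gg (C : Multiset ℕ) (m j : ℕ) : ℕ :=
  (C.map (fun c => c * STMW (C.erase c) m (j+c))).sum + Bi C (m+j) 0 m

lemma Gg_zero (C : Multiset ℕ) (j : ℕ) : Gg C 0 j = 0 := by
  unfold Gg Bi
  simp only [Finset.Ico_self, Finset.sum_empty, add_zero]
  have : (C.map (fun c => c * STMW (C.erase c) 0 (j+c))) = C.map (fun _ => 0) := by
    refine Multiset.map_congr rfl ?_
    intro c hc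
    rw [STMW_zero_left]
    ring
  rw [this]
  simp

lemma STMW_unroll (C : Multiset ℕ) (m w : ℕ) :
    STMW C m w = 4 * ∑ j ∈ Finset.range w, 2^(w-1-j) * Gg C m (j+1) := by
  induction w with
  | zero => rw [STMW_zero_right]; simp
  | succ w ih =>
    rcases Nat.eq_zero_or_pos m with rfl | hm
    · rw [STMW_zero_left]
      have : ∀ j ∈ Finset.range (w+1), 2^(w+1-1-j) * Gg C 0 (j+1) = 0 := by
        intro j hj; rw [Gg_zero]; ring
      rw [Finset.sum_congr rfl this]
      simp
    · rw [STMW_rec C m (w+1) hm (by omega)]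
      simp only [Nat.add_sub_cancel]
      rw [ih]
      have h4 : (C.map (fun c => 4 * c * STMW (C.erase c) m (w+1+c))).sum
          = 4 * (C.map (fun c => c * STMW (C.erase c) m (w+1+c))).sum := by
        rw [← Multiset.sum_map_mul_left]
        refine congrArg Multiset.sum (Multiset.map_congr rfl ?_)
        intro c hc; ring
      rw [h4]
      rw [Finset.sum_range_succ]
      have hterm : 2^(w+1-1-w) * Gg C m (w+1) = Gg C m (w+1) := by
        rw [show w+1-1-w = 0 by omega]; ring
      have hterm' : 2^(w-w) * Gg C m (w+1) = Gg C m (w+1) := by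
        rw [show w-w = 0 by omega]; ring
      have hshift : ∑ j ∈ Finset.range w, 2^(w-j) * Gg C m (j+1)
          = 2 * ∑ j ∈ Finset.range w, 2^(w-1-j) * Gg C m (j+1) := by
        rw [Finset.mul_sum]
        refine Finset.sum_congr rfl ?_
        intro j hj
        simp only [Finset.mem_range] at hj
        rw [show w-j = (w-1-j)+1 by omega, pow_succ]
        ring
      rw [hterm', hshift]
      unfold Gg
      ring

lemma STM_eq (C : Multiset ℕ) (m : ℕ) :
    STM C m = Bi C m 0 m + (C.map (fun c => c * STMW (C.erase c) m c)).sum := by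
  unfold STM Bi bk
  rw [← Finset.range_eq_Ico]

lemma STW_one_empty : STW 0 1 = 1 := by rw [STW]; rfl

lemma STW_one (C : Multiset ℕ) (hC : C ≠ 0) :
    STW C 1 = (C.map (fun c => 4 * c * STW (C.erase c) (c+1))).sum := by
  rw [STW, if_neg hC, attach_sum C (fun c => 4 * c * STW (C.erase c) (c+1))]

lemma STW_rec (C : Multiset ℕ) (w : ℕ) :
    STW C (w+2) = 2 * STW C (w+1) + (C.map (fun c => 4 * c * STW (C.erase c) (w+2+c))).sum := by
  rw [STW, attach_sum C (fun c => 4 * c * STW (C.erase c) (w+2+c))]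

lemma TEL (v : ℕ → ℕ) (hv : v 0 = 0) :
    ∀ w, 4 * ∑ j ∈ Finset.range w, 2^(w-1-j) * v (j+1)
      = 8 * ∑ j ∈ Finset.range w, 2^(w-1-j) * v j + 4 * v w := by
  intro w
  induction w with
  | zero => simp [hv]
  | succ w ih =>
    rw [Finset.sum_range_succ, Finset.sum_range_succ (f := fun j => 2^(w+1-1-j) * v j)]
    simp only [Nat.add_sub_cancel]
    have e1 : ∑ j ∈ Finset.range w, 2^(w-j) * v (j+1)
        = 2 * ∑ j ∈ Finset.range w, 2^(w-1-j) * v (j+1) := by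
      rw [Finset.mul_sum]
      refine Finset.sum_congr rfl ?_
      intro j hj
      simp only [Finset.mem_range] at hj
      rw [show w-j = (w-1-j)+1 by omega, pow_succ]
      ring
    have e2 : ∑ j ∈ Finset.range w, 2^(w-j) * v j
        = 2 * ∑ j ∈ Finset.range w, 2^(w-1-j) * v j := by
      rw [Finset.mul_sum]
      refine Finset.sum_congr rfl ?_
      intro j hj
      simp only [Finset.mem_range] at hj
      rw [show w-j = (w-1-j)+1 by omega, pow_succ]
      ring
    rw [show w-w = 0 by omega]
    rw [e1, e2]
    simp only [pow_zero]
    omega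

lemma diamond (C : Multiset ℕ) (i j : ℕ) :
    4 * (C.map (fun c => c * Bi (C.erase c) (i+j+2+c) 0 (j+1+c))).sum
      + Bi C (i+j+2) 0 (i+1) + 2 * Bi C (i+j+1) 0 j
    = 4 * (C.map (fun c => c * Bi (C.erase c) (i+j+2+c) 0 (i+1+c))).sum
      + Bi C (i+j+2) 0 (j+1) + 2 * Bi C (i+j+1) 0 i := by
  have hB1 := BREC C (i+j+2) (i+1) (by omega) (by omega) (Or.inr (by omega))
  have hB2 := BREC C (i+j+2) (j+1) (by omega) (by omega) (Or.inr (by omega))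
  rw [show min (i+1) (i+j+2-1) = i+1 by omega] at hB1
  rw [show min (j+1) (i+j+2-1) = j+1 by omega] at hB2
  rw [show i+j+2-1 = i+j+1 by omega] at hB1 hB2
  rw [show (i+1)-1 = i by omega] at hB1
  rw [show (j+1)-1 = j by omega] at hB2
  rw [hB1, hB2]
  -- crown-free part identity
  have hfree : bk C (i+j+1) i = bk C (i+j+1) j := by
    rw [bk_refl C (i+j+1) i (by omega)]
    congr 1
    omega
  have hfi : Bi C (i+j+1) 0 (i+1) = Bi C (i+j+1) 0 i + bk C (i+j+1) i :=
    Bi_succ C (i+j+1) 0 i (by omega)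
  have hfj : Bi C (i+j+1) 0 (j+1) = Bi C (i+j+1) 0 j + bk C (i+j+1) j :=
    Bi_succ C (i+j+1) 0 j (by omega)
  -- per-crown identity
  have hcrown : (C.map (fun c => 4 * (c * Bi (C.erase c) (i+j+2+c) 0 (j+1+c))
        + 2 * c * (Bi (C.erase c) (i+j+2+c) c (i+1+c) + Bi (C.erase c) (i+j+2+c) 0 (i+1)))).sum
      = (C.map (fun c => 4 * (c * Bi (C.erase c) (i+j+2+c) 0 (i+1+c))
        + 2 * c * (Bi (C.erase c) (i+j+2+c) c (j+1+c) + Bi (C.erase c) (i+j+2+c) 0 (j+1)))).sum := by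
    refine congrArg Multiset.sum (Multiset.map_congr rfl ?_)
    intro c hc
    have key : 2 * Bi (C.erase c) (i+j+2+c) 0 (j+1+c)
          + (Bi (C.erase c) (i+j+2+c) c (i+1+c) + Bi (C.erase c) (i+j+2+c) 0 (i+1))
        = 2 * Bi (C.erase c) (i+j+2+c) 0 (i+1+c)
          + (Bi (C.erase c) (i+j+2+c) c (j+1+c) + Bi (C.erase c) (i+j+2+c) 0 (j+1)) := by
      have sj : Bi (C.erase c) (i+j+2+c) 0 c + Bi (C.erase c) (i+j+2+c) c (j+1+c)
          = Bi (C.erase c) (i+j+2+c) 0 (j+1+c) := Bi_split _ _ 0 c (j+1+c) (by omega) (by omega)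
      have si : Bi (C.erase c) (i+j+2+c) 0 c + Bi (C.erase c) (i+j+2+c) c (i+1+c)
          = Bi (C.erase c) (i+j+2+c) 0 (i+1+c) := Bi_split _ _ 0 c (i+1+c) (by omega) (by omega)
      have ri : Bi (C.erase c) (i+j+2+c) 0 (i+1) = Bi (C.erase c) (i+j+2+c) (j+1+c) (i+j+2+c) := by
        have := Int_refl (C.erase c) (i+j+2+c) 0 (i+1) (by omega) (by omega)
        rw [this]
        congr 1 <;> omega
      have rj : Bi (C.erase c) (i+j+2+c) 0 (j+1) = Bi (C.erase c) (i+j+2+c) (i+1+c) (i+j+2+c) := by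
        have := Int_refl (C.erase c) (i+j+2+c) 0 (j+1) (by omega) (by omega)
        rw [this]
        congr 1 <;> omega
      have ci : Bi (C.erase c) (i+j+2+c) c (j+1+c) + Bi (C.erase c) (i+j+2+c) (j+1+c) (i+j+2+c)
          = Bi (C.erase c) (i+j+2+c) c (i+j+2+c) := Bi_split _ _ c (j+1+c) (i+j+2+c) (by omega) (by omega)
      have cj : Bi (C.erase c) (i+j+2+c) c (i+1+c) + Bi (C.erase c) (i+j+2+c) (i+1+c) (i+j+2+c)
          = Bi (C.erase c) (i+j+2+c) c (i+j+2+c) := Bi_split _ _ c (i+1+c) (i+j+2+c) (by omega) (by omega)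
      omega
    have lhs2 : 4 * (c * Bi (C.erase c) (i+j+2+c) 0 (j+1+c))
          + 2 * c * (Bi (C.erase c) (i+j+2+c) c (i+1+c) + Bi (C.erase c) (i+j+2+c) 0 (i+1))
        = 2 * c * (2 * Bi (C.erase c) (i+j+2+c) 0 (j+1+c)
          + (Bi (C.erase c) (i+j+2+c) c (i+1+c) + Bi (C.erase c) (i+j+2+c) 0 (i+1))) := by ring
    have rhs2 : 4 * (c * Bi (C.erase c) (i+j+2+c) 0 (i+1+c))
          + 2 * c * (Bi (C.erase c) (i+j+2+c) c (j+1+c) + Bi (C.erase c) (i+j+2+c) 0 (j+1))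
        = 2 * c * (2 * Bi (C.erase c) (i+j+2+c) 0 (i+1+c)
          + (Bi (C.erase c) (i+j+2+c) c (j+1+c) + Bi (C.erase c) (i+j+2+c) 0 (j+1))) := by ring
    rw [lhs2, rhs2, key]
  -- assemble
  have expandL : 4 * (C.map (fun c => c * Bi (C.erase c) (i+j+2+c) 0 (j+1+c))).sum
      + (C.map (fun d => 2 * d * (Bi (C.erase d) (i+j+2+d) d (i+1+d) + Bi (C.erase d) (i+j+2+d) 0 (i+1)))).sum
      = (C.map (fun c => 4 * (c * Bi (C.erase c) (i+j+2+c) 0 (j+1+c))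
        + 2 * c * (Bi (C.erase c) (i+j+2+c) c (i+1+c) + Bi (C.erase c) (i+j+2+c) 0 (i+1)))).sum := by
    rw [Multiset.sum_map_add, ← Multiset.sum_map_mul_left]
  have expandR : 4 * (C.map (fun c => c * Bi (C.erase c) (i+j+2+c) 0 (i+1+c))).sum
      + (C.map (fun d => 2 * d * (Bi (C.erase d) (i+j+2+d) d (j+1+d) + Bi (C.erase d) (i+j+2+d) 0 (j+1)))).sum
      = (C.map (fun c => 4 * (c * Bi (C.erase c) (i+j+2+c) 0 (i+1+c))
        + 2 * c * (Bi (C.erase c) (i+j+2+c) c (j+1+c) + Bi (C.erase c) (i+j+2+c) 0 (j+1)))).sum := by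
    rw [Multiset.sum_map_add, ← Multiset.sum_map_mul_left]
  omega

def Hh (C : Multiset ℕ) (i j : ℕ) : ℕ :=
  (C.map (fun c => c * Gg (C.erase c) (j+c) i)).sum

theorem STMW_comm (C : Multiset ℕ) : ∀ m w, STMW C m w = STMW C w m := by
  induction C using Multiset.strongInductionOn with
  | ih C IH =>
  intro m w
  rcases Nat.eq_zero_or_pos m with rfl | hm
  · rw [STMW_zero_left, STMW_zero_right]
  rcases Nat.eq_zero_or_pos w with rfl | hw
  · rw [STMW_zero_left, STMW_zero_right]
  -- expansion
  have expand : ∀ a b : ℕ, STMW C a b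
      = (∑ j ∈ Finset.range b, ∑ i ∈ Finset.range a,
          2^(b-1-j) * 2^(a-1-i) * (16 * Hh C (i+1) (j+1)))
        + ∑ j ∈ Finset.range b, 2^(b-1-j) * (4 * Bi C (a+j+1) 0 a) := by
    intro a b
    rw [STMW_unroll C a b]
    have hGg : ∀ j, Gg C a (j+1)
        = (∑ i ∈ Finset.range a, 2^(a-1-i) * (4 * Hh C (i+1) (j+1))) + Bi C (a+j+1) 0 a := by
      intro j
      unfold Gg
      have hIdx : Bi C (a+(j+1)) 0 a = Bi C (a+j+1) 0 a := by
        rw [show a+(j+1) = a+j+1 by omega]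
      rw [hIdx]
      congr 1
      have h1 : (C.map (fun c => c * STMW (C.erase c) a (j+1+c))).sum
          = (C.map (fun c => ∑ i ∈ Finset.range a,
              2^(a-1-i) * (4 * (c * Gg (C.erase c) (j+1+c) (i+1))))).sum := by
        refine congrArg Multiset.sum (Multiset.map_congr rfl ?_)
        intro c hc
        rw [IH (C.erase c) (Multiset.erase_lt.mpr hc) a (j+1+c), STMW_unroll]
        rw [Finset.mul_sum, Finset.mul_sum]
        refine Finset.sum_congr rfl ?_
        intro i hi
        ring
      rw [h1, map_finsum C (Finset.range a)
        (fun i c => 2^(a-1-i) * (4 * (c * Gg (C.erase c) (j+1+c) (i+1))))]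
      refine Finset.sum_congr rfl ?_
      intro i hi
      have hcg : (C.map (fun c => 2^(a-1-i) * (4 * (c * Gg (C.erase c) (j+1+c) (i+1))))).sum
          = (C.map (fun c => (2^(a-1-i) * 4) * (c * Gg (C.erase c) (j+1+c) (i+1)))).sum :=
        congrArg Multiset.sum (Multiset.map_congr rfl (fun c hc => by ring))
      rw [hcg, Multiset.sum_map_mul_left]
      unfold Hh
      ring
    have h2 : ∑ j ∈ Finset.range b, 2^(b-1-j) * Gg C a (j+1)
        = ∑ j ∈ Finset.range b, ((∑ i ∈ Finset.range a,
            2^(b-1-j) * (2^(a-1-i) * (4 * Hh C (i+1) (j+1))))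
          + 2^(b-1-j) * Bi C (a+j+1) 0 a) := by
      refine Finset.sum_congr rfl ?_
      intro j hj
      rw [hGg j, Nat.mul_add, Finset.mul_sum]
    rw [h2, Finset.sum_add_distrib, Nat.mul_add]
    congr 1
    · rw [Finset.mul_sum]
      refine Finset.sum_congr rfl ?_
      intro j hj
      rw [Finset.mul_sum]
      refine Finset.sum_congr rfl ?_
      intro i hi
      ring
    · rw [Finset.mul_sum]
      refine Finset.sum_congr rfl ?_
      intro j hj
      ring
  -- key pointwise identity
  have key4 : ∀ i j : ℕ, 16 * Hh C (i+1) (j+1) + 4 * Bi C (i+j+2) 0 (i+1) + 8 * Bi C (i+j+1) 0 j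
      = 16 * Hh C (j+1) (i+1) + 4 * Bi C (i+j+2) 0 (j+1) + 8 * Bi C (i+j+1) 0 i := by
    intro i j
    have hsplit : ∀ I J : ℕ, Hh C I J
        = (C.map (fun c => ((C.erase c).map
              (fun d => c * d * STMW ((C.erase c).erase d) (J+c) (I+d))).sum)).sum
          + (C.map (fun c => c * Bi (C.erase c) (I+J+c) 0 (J+c))).sum := by
      intro I J
      unfold Hh Gg
      rw [← Multiset.sum_map_add]
      refine congrArg Multiset.sum (Multiset.map_congr rfl ?_)
      intro c hc
      rw [show (J+c)+I = I+J+c by omega]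
      rw [show c * (((C.erase c).map (fun d => d * STMW ((C.erase c).erase d) (J+c) (I+d))).sum
            + Bi (C.erase c) (I+J+c) 0 (J+c))
          = c * ((C.erase c).map (fun d => d * STMW ((C.erase c).erase d) (J+c) (I+d))).sum
            + c * Bi (C.erase c) (I+J+c) 0 (J+c) from by ring]
      congr 1
      rw [← Multiset.sum_map_mul_left]
      refine congrArg Multiset.sum (Multiset.map_congr rfl ?_)
      intro d hd
      ring
    have hS1 : (C.map (fun c => ((C.erase c).map
            (fun d => c * d * STMW ((C.erase c).erase d) ((j+1)+c) ((i+1)+d))).sum)).sum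
        = (C.map (fun c => ((C.erase c).map
            (fun d => c * d * STMW ((C.erase c).erase d) ((i+1)+c) ((j+1)+d))).sum)).sum := by
      rw [exchange2 C (fun c d => c * d * STMW ((C.erase c).erase d) ((j+1)+c) ((i+1)+d))]
      refine congrArg Multiset.sum (Multiset.map_congr rfl ?_)
      intro x hx
      refine congrArg Multiset.sum (Multiset.map_congr rfl ?_)
      intro y hy
      have hcomm : (C.erase y).erase x = (C.erase x).erase y := Multiset.erase_comm C y x
      rw [hcomm]
      have hlt : (C.erase x).erase y < C :=
        lt_of_le_of_lt (Multiset.erase_le y (C.erase x)) (Multiset.erase_lt.mpr hx)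
      rw [IH _ hlt ((j+1)+y) ((i+1)+x)]
      ring
    have e1 := hsplit (i+1) (j+1)
    have e2 := hsplit (j+1) (i+1)
    have n1 : (C.map (fun c => c * Bi (C.erase c) ((i+1)+(j+1)+c) 0 ((j+1)+c))).sum
        = (C.map (fun c => c * Bi (C.erase c) (i+j+2+c) 0 (j+1+c))).sum := by
      refine congrArg Multiset.sum (Multiset.map_congr rfl ?_)
      intro c hc
      rw [show (i+1)+(j+1)+c = i+j+2+c by omega]
    have n2 : (C.map (fun c => c * Bi (C.erase c) ((j+1)+(i+1)+c) 0 ((i+1)+c))).sum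
        = (C.map (fun c => c * Bi (C.erase c) (i+j+2+c) 0 (i+1+c))).sum := by
      refine congrArg Multiset.sum (Multiset.map_congr rfl ?_)
      intro c hc
      rw [show (j+1)+(i+1)+c = i+j+2+c by omega]
    have hd := diamond C i j
    rw [e1, e2, n1, n2] at *
    omega
  -- grid assembly
  have EQ2 : ∀ j : ℕ, ∑ i ∈ Finset.range m, 2^(m-1-i) * (4 * Bi C (i+j+2) 0 (i+1))
      = (∑ i ∈ Finset.range m, 2^(m-1-i) * (8 * Bi C (i+j+1) 0 i)) + 4 * Bi C (m+j+1) 0 m := by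
    intro j
    have ht := TEL (fun x => Bi C (x+j+1) 0 x) (by simp [Bi]) m
    have hL : 4 * ∑ i ∈ Finset.range m, 2^(m-1-i) * Bi C ((i+1)+j+1) 0 (i+1)
        = ∑ i ∈ Finset.range m, 2^(m-1-i) * (4 * Bi C (i+j+2) 0 (i+1)) := by
      rw [Finset.mul_sum]
      refine Finset.sum_congr rfl ?_
      intro i hi
      rw [show (i+1)+j+1 = i+j+2 by omega]
      ring
    have hR : 8 * ∑ i ∈ Finset.range m, 2^(m-1-i) * Bi C (i+j+1) 0 i
        = ∑ i ∈ Finset.range m, 2^(m-1-i) * (8 * Bi C (i+j+1) 0 i) := by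
      rw [Finset.mul_sum]
      refine Finset.sum_congr rfl ?_
      intro i hi
      ring
    rw [← hL, ← hR]
    exact ht
  have EQ1 : ∀ i : ℕ, ∑ j ∈ Finset.range w, 2^(w-1-j) * (4 * Bi C (i+j+2) 0 (j+1))
      = (∑ j ∈ Finset.range w, 2^(w-1-j) * (8 * Bi C (i+j+1) 0 j)) + 4 * Bi C (i+w+1) 0 w := by
    intro i
    have ht := TEL (fun x => Bi C (i+x+1) 0 x) (by simp [Bi]) w
    have hL : 4 * ∑ j ∈ Finset.range w, 2^(w-1-j) * Bi C (i+(j+1)+1) 0 (j+1)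
        = ∑ j ∈ Finset.range w, 2^(w-1-j) * (4 * Bi C (i+j+2) 0 (j+1)) := by
      rw [Finset.mul_sum]
      refine Finset.sum_congr rfl ?_
      intro j hj
      rw [show i+(j+1)+1 = i+j+2 by omega]
      ring
    have hR : 8 * ∑ j ∈ Finset.range w, 2^(w-1-j) * Bi C (i+j+1) 0 j
        = ∑ j ∈ Finset.range w, 2^(w-1-j) * (8 * Bi C (i+j+1) 0 j) := by
      rw [Finset.mul_sum]
      refine Finset.sum_congr rfl ?_
      intro j hj
      ring
    rw [← hL, ← hR]
    exact ht
  rw [expand m w, expand w m]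
  -- canonical double sums
  have hcomm : (∑ j ∈ Finset.range m, ∑ i ∈ Finset.range w,
        2^(m-1-j) * 2^(w-1-i) * (16 * Hh C (i+1) (j+1)))
      = ∑ j ∈ Finset.range w, ∑ i ∈ Finset.range m,
        2^(w-1-j) * 2^(m-1-i) * (16 * Hh C (j+1) (i+1)) := by
    rw [Finset.sum_comm]
    refine Finset.sum_congr rfl ?_
    intro j hj
    refine Finset.sum_congr rfl ?_
    intro i hi
    ring
  rw [hcomm]
  -- define the six aggregates via facts
  have F1 : (∑ j ∈ Finset.range w, ∑ i ∈ Finset.range m,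
        2^(w-1-j) * 2^(m-1-i) * (16 * Hh C (i+1) (j+1)))
      + (∑ j ∈ Finset.range w, ∑ i ∈ Finset.range m,
        2^(w-1-j) * 2^(m-1-i) * (4 * Bi C (i+j+2) 0 (i+1)))
      + (∑ j ∈ Finset.range w, ∑ i ∈ Finset.range m,
        2^(w-1-j) * 2^(m-1-i) * (8 * Bi C (i+j+1) 0 j))
      = (∑ j ∈ Finset.range w, ∑ i ∈ Finset.range m,
        2^(w-1-j) * 2^(m-1-i) * (16 * Hh C (j+1) (i+1)))
      + (∑ j ∈ Finset.range w, ∑ i ∈ Finset.range m,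
        2^(w-1-j) * 2^(m-1-i) * (4 * Bi C (i+j+2) 0 (j+1)))
      + (∑ j ∈ Finset.range w, ∑ i ∈ Finset.range m,
        2^(w-1-j) * 2^(m-1-i) * (8 * Bi C (i+j+1) 0 i)) := by
    rw [← Finset.sum_add_distrib, ← Finset.sum_add_distrib,
        ← Finset.sum_add_distrib, ← Finset.sum_add_distrib]
    refine Finset.sum_congr rfl ?_
    intro j hj
    rw [← Finset.sum_add_distrib, ← Finset.sum_add_distrib,
        ← Finset.sum_add_distrib, ← Finset.sum_add_distrib]
    refine Finset.sum_congr rfl ?_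
    intro i hi
    have := key4 i j
    -- multiply by the weight
    have hmul : 2^(w-1-j) * 2^(m-1-i) * (16 * Hh C (i+1) (j+1))
        + 2^(w-1-j) * 2^(m-1-i) * (4 * Bi C (i+j+2) 0 (i+1))
        + 2^(w-1-j) * 2^(m-1-i) * (8 * Bi C (i+j+1) 0 j)
        = 2^(w-1-j) * 2^(m-1-i) * (16 * Hh C (i+1) (j+1) + 4 * Bi C (i+j+2) 0 (i+1)
            + 8 * Bi C (i+j+1) 0 j) := by ring
    have hmul2 : 2^(w-1-j) * 2^(m-1-i) * (16 * Hh C (j+1) (i+1))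
        + 2^(w-1-j) * 2^(m-1-i) * (4 * Bi C (i+j+2) 0 (j+1))
        + 2^(w-1-j) * 2^(m-1-i) * (8 * Bi C (i+j+1) 0 i)
        = 2^(w-1-j) * 2^(m-1-i) * (16 * Hh C (j+1) (i+1) + 4 * Bi C (i+j+2) 0 (j+1)
            + 8 * Bi C (i+j+1) 0 i) := by ring
    rw [hmul, hmul2]
    exact congrArg (fun x => 2^(w-1-j) * 2^(m-1-i) * x) (key4 i j)
  have F2 : (∑ j ∈ Finset.range w, ∑ i ∈ Finset.range m,
        2^(w-1-j) * 2^(m-1-i) * (4 * Bi C (i+j+2) 0 (i+1)))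
      = (∑ j ∈ Finset.range w, ∑ i ∈ Finset.range m,
        2^(w-1-j) * 2^(m-1-i) * (8 * Bi C (i+j+1) 0 i))
        + ∑ j ∈ Finset.range w, 2^(w-1-j) * (4 * Bi C (m+j+1) 0 m) := by
    rw [← Finset.sum_add_distrib]
    refine Finset.sum_congr rfl ?_
    intro j hj
    have h := EQ2 j
    have hp : ∀ X : ℕ → ℕ, ∑ i ∈ Finset.range m, 2^(w-1-j) * 2^(m-1-i) * X i
        = 2^(w-1-j) * ∑ i ∈ Finset.range m, 2^(m-1-i) * X i := by
      intro X
      rw [Finset.mul_sum]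
      refine Finset.sum_congr rfl ?_
      intro i hi
      ring
    rw [hp (fun i => 4 * Bi C (i+j+2) 0 (i+1)), hp (fun i => 8 * Bi C (i+j+1) 0 i), h]
    ring
  have F3 : (∑ j ∈ Finset.range w, ∑ i ∈ Finset.range m,
        2^(w-1-j) * 2^(m-1-i) * (4 * Bi C (i+j+2) 0 (j+1)))
      = (∑ j ∈ Finset.range w, ∑ i ∈ Finset.range m,
        2^(w-1-j) * 2^(m-1-i) * (8 * Bi C (i+j+1) 0 j))
        + ∑ i ∈ Finset.range m, 2^(m-1-i) * (4 * Bi C (w+i+1) 0 w) := by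
    rw [Finset.sum_comm, Finset.sum_comm (f := fun j i =>
        2^(w-1-j) * 2^(m-1-i) * (8 * Bi C (i+j+1) 0 j))]
    rw [← Finset.sum_add_distrib]
    refine Finset.sum_congr rfl ?_
    intro i hi
    have h := EQ1 i
    have hp : ∀ X : ℕ → ℕ, ∑ j ∈ Finset.range w, 2^(w-1-j) * 2^(m-1-i) * X j
        = 2^(m-1-i) * ∑ j ∈ Finset.range w, 2^(w-1-j) * X j := by
      intro X
      rw [Finset.mul_sum]
      refine Finset.sum_congr rfl ?_
      intro j hj
      ring
    rw [hp (fun j => 4 * Bi C (i+j+2) 0 (j+1)), hp (fun j => 8 * Bi C (i+j+1) 0 j), h]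
    have : Bi C (i+w+1) 0 w = Bi C (w+i+1) 0 w := by rw [show i+w+1 = w+i+1 by omega]
    rw [this]
    ring
  omega

lemma pull_mul (b : ℕ) (s : Multiset ℕ) (f g : ℕ → ℕ) (h : ∀ d ∈ s, b * f d = g d) :
    b * (s.map f).sum = (s.map g).sum := by
  rw [← Multiset.sum_map_mul_left]
  exact congrArg Multiset.sum (Multiset.map_congr rfl h)

/-- the double-sum swap used in both base and step -/
lemma double_swap (C : Multiset ℕ) (A : ℕ) :
    (C.map (fun c => ((C.erase c).map
        (fun d => 4 * c * d * STMW ((C.erase c).erase d) c (A+d))).sum)).sum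
    = (C.map (fun c => ((C.erase c).map
        (fun d => 4 * c * d * STMW ((C.erase c).erase d) (A+c) d)).sum)).sum := by
  rw [exchange2 C (fun c d => 4 * c * d * STMW ((C.erase c).erase d) c (A+d))]
  refine congrArg Multiset.sum (Multiset.map_congr rfl ?_)
  intro x hx
  refine congrArg Multiset.sum (Multiset.map_congr rfl ?_)
  intro y hy
  rw [Multiset.erase_comm C y x, STMW_comm]
  ring

theorem main (C : Multiset ℕ) : ∀ m, 1 ≤ m → STM C m = STW C m := by
  induction C using Multiset.strongInductionOn with
  | ih C IH =>
  intro m hm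
  induction m, hm using Nat.le_induction with
  | base =>
    rw [STM_eq C 1]
    rcases eq_or_ne C 0 with rfl | hC0
    · rw [STW_one_empty]
      have h1 : STN (0 : Multiset ℕ) 0 = 1 := by rw [STN_rec]; simp
      have hbk : bk (0 : Multiset ℕ) 1 0 = 1 := by
        unfold bk
        rw [Multiset.powerset_zero, Multiset.map_singleton, Multiset.sum_singleton]
        simp [h1]
      have hBi : Bi (0 : Multiset ℕ) 1 0 1 = 1 := by
        unfold Bi
        rw [Finset.sum_Ico_succ_top (le_refl 0)]
        simp [hbk]
      rw [hBi, Multiset.map_zero, Multiset.sum_zero]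
      omega
    · rw [STW_one C hC0]
      -- base-case bk identity
      have hb0 : bk C 1 0 = (C.map (fun c => 4 * c * bk (C.erase c) (1+c) c)).sum := by
        have h := bk_rec C 1 0 (by omega) (Or.inl hC0)
        norm_num at h
        rw [h]
        refine congrArg Multiset.sum (Multiset.map_congr rfl ?_)
        intro c hc
        have hr : bk (C.erase c) (1+c) 0 = bk (C.erase c) (1+c) c := by
          rw [bk_refl (C.erase c) (1+c) 0 (by omega)]
          congr 1
          omega
        rw [hr]
        ring
      have hBi1 : Bi C 1 0 1 = bk C 1 0 := by
        rw [Bi_succ C 1 0 0 (le_refl 0)]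
        unfold Bi
        simp
      -- expand LHS crown sum
      have hL : (C.map (fun c => c * STMW (C.erase c) 1 c)).sum
          = (C.map (fun c => ((C.erase c).map
                (fun d => 4 * c * d * STMW ((C.erase c).erase d) c (1+d))).sum
              + 4 * c * Bi (C.erase c) (c+1) 0 c)).sum := by
        refine congrArg Multiset.sum (Multiset.map_congr rfl ?_)
        intro c hc
        rcases Nat.eq_zero_or_pos c with rfl | hcpos
        · simp
        · rw [STMW_comm (C.erase c) 1 c, STMW_rec (C.erase c) c 1 hcpos (by omega)]
          rw [STMW_zero_right]
          have hpull : c * (((C.erase c)).map (fun d => 4 * d * STMW ((C.erase c).erase d) c (1+d))).sum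
              = ((C.erase c).map (fun d => 4 * c * d * STMW ((C.erase c).erase d) c (1+d))).sum :=
            pull_mul c (C.erase c) _ _ (fun d hd => by ring)
          calc c * (2 * 0 + ((C.erase c).map (fun d => 4 * d * STMW ((C.erase c).erase d) c (1+d))).sum
                + 4 * Bi (C.erase c) (c+1) 0 c)
              = c * ((C.erase c).map (fun d => 4 * d * STMW ((C.erase c).erase d) c (1+d))).sum
                + 4 * c * Bi (C.erase c) (c+1) 0 c := by ring
            _ = _ := by rw [hpull]
      -- expand RHS
      have hR : (C.map (fun c => 4 * c * STW (C.erase c) (c+1))).sum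
          = (C.map (fun c => ((C.erase c).map
                (fun d => 4 * c * d * STMW ((C.erase c).erase d) (1+c) d)).sum
              + 4 * c * (Bi (C.erase c) (c+1) 0 c + bk (C.erase c) (c+1) c))).sum := by
        refine congrArg Multiset.sum (Multiset.map_congr rfl ?_)
        intro c hc
        have hlt : C.erase c < C := Multiset.erase_lt.mpr hc
        rw [← IH (C.erase c) hlt (c+1) (by omega), STM_eq]
        have hsp : Bi (C.erase c) (c+1) 0 (c+1) = Bi (C.erase c) (c+1) 0 c + bk (C.erase c) (c+1) c :=
          Bi_succ (C.erase c) (c+1) 0 c (by omega)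
        rw [hsp]
        have hpull : (4 * c) * ((C.erase c).map (fun d => d * STMW ((C.erase c).erase d) (c+1) d)).sum
            = ((C.erase c).map (fun d => 4 * c * d * STMW ((C.erase c).erase d) (1+c) d)).sum :=
          pull_mul (4*c) (C.erase c) _ _ (fun d hd => by
            rw [show (1:ℕ)+c = c+1 by omega]; ring)
        rw [← hpull]
        ring
      rw [hBi1, hb0, hL, hR]
      rw [Multiset.sum_map_add, Multiset.sum_map_add]
      rw [double_swap C 1]
      have hsplit4 : (C.map (fun c => 4 * c * (Bi (C.erase c) (c+1) 0 c + bk (C.erase c) (c+1) c))).sum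
          = (C.map (fun c => 4 * c * Bi (C.erase c) (c+1) 0 c)).sum
            + (C.map (fun c => 4 * c * bk (C.erase c) (c+1) c)).sum := by
        rw [← Multiset.sum_map_add]
        refine congrArg Multiset.sum (Multiset.map_congr rfl ?_)
        intro c hc
        ring
      rw [hsplit4]
      have hbkarg : (C.map (fun c => 4 * c * bk (C.erase c) (1+c) c)).sum
          = (C.map (fun c => 4 * c * bk (C.erase c) (c+1) c)).sum := by
        refine congrArg Multiset.sum (Multiset.map_congr rfl ?_)
        intro c hc
        rw [show (1:ℕ)+c = c+1 by omega]
      have hBiarg : (C.map (fun c => 4 * c * Bi (C.erase c) (c+1) 0 c)).sum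
          = (C.map (fun c => 4 * c * Bi (C.erase c) (c+1) 0 c)).sum := rfl
      omega
  | succ m hm1 ihm =>
    -- step
    obtain ⟨m', rfl⟩ : ∃ m', m = m' + 1 := ⟨m - 1, by omega⟩
    rw [show m' + 1 + 1 = m' + 2 by omega, STW_rec C m']
    rw [show m' + 1 + 1 = m' + 2 by omega] at *
    rw [← ihm]
    rw [STM_eq C (m'+2), STM_eq C (m'+1)]
    -- expand crown sum of LHS
    have hL : (C.map (fun c => c * STMW (C.erase c) (m'+2) c)).sum
        = (C.map (fun c => 2 * (c * STMW (C.erase c) (m'+1) c)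
            + ((C.erase c).map (fun d => 4 * c * d * STMW ((C.erase c).erase d) c (m'+2+d))).sum
            + 4 * c * Bi (C.erase c) (c+(m'+2)) 0 c)).sum := by
      refine congrArg Multiset.sum (Multiset.map_congr rfl ?_)
      intro c hc
      rcases Nat.eq_zero_or_pos c with rfl | hcpos
      · simp
      · rw [STMW_comm (C.erase c) (m'+2) c, STMW_rec (C.erase c) c (m'+2) hcpos (by omega)]
        rw [show m'+2-1 = m'+1 by omega]
        rw [STMW_comm (C.erase c) c (m'+1)]
        have hpull : c * ((C.erase c).map (fun d => 4 * d * STMW ((C.erase c).erase d) c (m'+2+d))).sum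
            = ((C.erase c).map (fun d => 4 * c * d * STMW ((C.erase c).erase d) c (m'+2+d))).sum :=
          pull_mul c (C.erase c) _ _ (fun d hd => by ring)
        rw [← hpull]
        ring
    -- expand RHS crown sum
    have hR : (C.map (fun c => 4 * c * STW (C.erase c) (m'+2+c))).sum
        = (C.map (fun c =>
            ((C.erase c).map (fun d => 4 * c * d * STMW ((C.erase c).erase d) (m'+2+c) d)).sum
            + 4 * c * Bi (C.erase c) (m'+2+c) 0 (m'+2+c))).sum := by
      refine congrArg Multiset.sum (Multiset.map_congr rfl ?_)
      intro c hc
      have hlt : C.erase c < C := Multiset.erase_lt.mpr hc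
      rw [← IH (C.erase c) hlt (m'+2+c) (by omega), STM_eq]
      have hpull : (4 * c) * ((C.erase c).map (fun d => d * STMW ((C.erase c).erase d) (m'+2+c) d)).sum
          = ((C.erase c).map (fun d => 4 * c * d * STMW ((C.erase c).erase d) (m'+2+c) d)).sum :=
        pull_mul (4*c) (C.erase c) _ _ (fun d hd => by ring)
      rw [← hpull]
      ring
    rw [hL, hR]
    rw [Multiset.sum_map_add, Multiset.sum_map_add, Multiset.sum_map_add]
    rw [double_swap C (m'+2)]
    -- the Bi identity (iii)
    have hBREC := BREC C (m'+2) (m'+2) (by omega) (le_refl _) (Or.inr (by omega))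
    rw [show m'+2-1 = m'+1 by omega] at hBREC
    rw [show min (m'+2) (m'+1) = m'+1 by omega] at hBREC
    have hper : (C.map (fun d => 2 * d * (Bi (C.erase d) (m'+2+d) d (m'+2+d)
          + Bi (C.erase d) (m'+2+d) 0 (m'+2)))).sum
        + (C.map (fun c => 4 * c * Bi (C.erase c) (c+(m'+2)) 0 c)).sum
        = (C.map (fun c => 4 * c * Bi (C.erase c) (m'+2+c) 0 (m'+2+c))).sum := by
      rw [← Multiset.sum_map_add]
      refine congrArg Multiset.sum (Multiset.map_congr rfl ?_)
      intro c hc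
      have hrefl : Bi (C.erase c) (m'+2+c) 0 (m'+2) = Bi (C.erase c) (m'+2+c) c (m'+2+c) := by
        rw [Int_refl (C.erase c) (m'+2+c) 0 (m'+2) (by omega) (by omega)]
        congr 1 <;> omega
      have hsp : Bi (C.erase c) (m'+2+c) 0 c + Bi (C.erase c) (m'+2+c) c (m'+2+c)
          = Bi (C.erase c) (m'+2+c) 0 (m'+2+c) :=
        Bi_split (C.erase c) (m'+2+c) 0 c (m'+2+c) (by omega) (by omega)
      have harg : c+(m'+2) = m'+2+c := by omega
      rw [hrefl, harg, ← hsp]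
      ring
    -- pull out 2 from the first part of hL sum
    have h2pull : (C.map (fun c => 2 * (c * STMW (C.erase c) (m'+1) c))).sum
        = 2 * (C.map (fun c => c * STMW (C.erase c) (m'+1) c)).sum :=
      Multiset.sum_map_mul_left
    omega

end SCJ

/-- M/W symmetry: ST_M(C, m) = ST_W(C, m) for crowns of size at least 2 and m ≥ 1. -/
theorem STM_eq_STW (C : Multiset ℕ) (hC : ∀ c ∈ C, 2 ≤ c) (m : ℕ) (hm : 1 ≤ m) :
    STM C m = STW C m :=
  SCJ.main C m hm
end

section
/- For every finite multiset C of natural numbers all of whose elements are at least 2, and all natural numbers m and w, one has ST_MW(C, m, w) = ST_MW(C, w, m). (This is the symmetry of ST_MW from the paper's Corollary 'mwsymmetry', expressed as an identity of the recursively defined counting function.) -/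
namespace SymmAux


/-- Convert an attach-map sum into a plain map sum. -/
lemma attach_sum (s : Multiset ℕ) (f : ℕ → ℕ) :
    (s.attach.map (fun c => f c.1)).sum = (s.map f).sum := by
  have : s.attach.map (fun c => f c.1) = (s.attach.map Subtype.val).map f := by
    rw [Multiset.map_map]; rfl
  rw [this, Multiset.attach_map_val]

/-- Swap the roles of the two chosen elements in a double sum over a multiset. -/
lemma swap_pairs (C : Multiset ℕ) (F : ℕ → ℕ → ℕ) :
    (C.map (fun c => ((C.erase c).map (fun c' => F c c')).sum)).sum
      = (C.map (fun c => ((C.erase c).map (fun c' => F c' c)).sum)).sum := by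
  induction C using Multiset.induction with
  | empty => simp
  | cons a s ih =>
    have herase : ∀ c ∈ s, (a ::ₘ s).erase c = a ::ₘ s.erase c := by
      intro c hc
      by_cases hac : c = a
      · subst hac; rw [Multiset.erase_cons_head, Multiset.cons_erase hc]
      · rw [Multiset.erase_cons_tail]; exact fun h => hac h.symm
    have expand : ∀ G : ℕ → ℕ → ℕ,
        ((a ::ₘ s).map (fun c => (((a ::ₘ s).erase c).map (fun c' => G c c')).sum)).sum
        = (s.map (fun c' => G a c')).sum + ((s.map (fun c => G c a)).sum
            + (s.map (fun c => ((s.erase c).map (fun c' => G c c')).sum)).sum) := by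
      intro G
      rw [Multiset.map_cons, Multiset.sum_cons, Multiset.erase_cons_head]
      congr 1
      have : s.map (fun c => (((a ::ₘ s).erase c).map (fun c' => G c c')).sum)
          = s.map (fun c => G c a + ((s.erase c).map (fun c' => G c c')).sum) := by
        apply Multiset.map_congr rfl
        intro c hc
        rw [herase c hc, Multiset.map_cons, Multiset.sum_cons]
      rw [this, Multiset.sum_map_add]
    rw [expand F, expand (fun x y => F y x)]
    rw [ih]
    ac_rfl

/-- Summing a function of the complement over the powerset. -/
lemma powerset_compl (C : Multiset ℕ) (F : Multiset ℕ → ℕ) :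
    (C.powerset.map F).sum = (C.powerset.map (fun C' => F (C - C'))).sum := by
  induction C using Multiset.induction generalizing F with
  | empty => simp
  | cons a s ih =>
    rw [Multiset.powerset_cons, Multiset.map_add, Multiset.sum_add,
        Multiset.map_add, Multiset.sum_add, Multiset.map_map, Multiset.map_map]
    have h1 : s.powerset.map (fun C' => F (a ::ₘ s - C'))
        = s.powerset.map (fun C' => F (a ::ₘ (s - C'))) := by
      apply Multiset.map_congr rfl
      intro C' hC'
      rw [Multiset.mem_powerset] at hC'
      congr 1
      exact Multiset.cons_sub_of_le a hC'
    have h2 : s.powerset.map ((fun C' => F (a ::ₘ s - C')) ∘ Multiset.cons a)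
        = s.powerset.map (fun C' => F (s - C')) := by
      apply Multiset.map_congr rfl
      intro C' hC'
      simp only [Function.comp]
      congr 1
      rw [Multiset.sub_cons, Multiset.erase_cons_head]
    rw [h1, h2, ih (fun C' => F C'), ← ih (fun C' => F (a ::ₘ C'))]
    simp only [Function.comp]
    exact Nat.add_comm _ _




/-- Exchange: sum over submultisets then over elements of the complement. -/
lemma exchange_compl (C : Multiset ℕ) (F : ℕ → Multiset ℕ → ℕ) :
    (C.powerset.map (fun C' => ((C - C').map (fun c => F c C')).sum)).sum
      = (C.map (fun c => (((C.erase c).powerset).map (fun D => F c D)).sum)).sum := by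
  induction C using Multiset.induction generalizing F with
  | empty => simp
  | cons a s ih =>
    have herase : ∀ c ∈ s, (a ::ₘ s).erase c = a ::ₘ s.erase c := by
      intro c hc
      by_cases hac : c = a
      · subst hac; rw [Multiset.erase_cons_head, Multiset.cons_erase hc]
      · rw [Multiset.erase_cons_tail]; exact fun h => hac h.symm
    -- LHS
    rw [Multiset.powerset_cons, Multiset.map_add, Multiset.sum_add, Multiset.map_map]
    have h1 : s.powerset.map (fun C' => ((a ::ₘ s - C').map (fun c => F c C')).sum)
        = s.powerset.map (fun C' => F a C' + ((s - C').map (fun c => F c C')).sum) := by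
      apply Multiset.map_congr rfl
      intro C' hC'
      rw [Multiset.mem_powerset] at hC'
      rw [Multiset.cons_sub_of_le a hC', Multiset.map_cons, Multiset.sum_cons]
    have h2 : s.powerset.map ((fun C' => ((a ::ₘ s - C').map (fun c => F c C')).sum)
          ∘ Multiset.cons a)
        = s.powerset.map (fun C' => ((s - C').map (fun c => F c (a ::ₘ C'))).sum) := by
      apply Multiset.map_congr rfl
      intro C' hC'
      simp only [Function.comp]
      rw [Multiset.sub_cons, Multiset.erase_cons_head]
    rw [h1, h2, Multiset.sum_map_add, ih (fun c D => F c (a ::ₘ D)), ih F]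
    -- RHS
    rw [Multiset.map_cons, Multiset.sum_cons, Multiset.erase_cons_head]
    have h3 : s.map (fun c => (((a ::ₘ s).erase c).powerset.map (fun D => F c D)).sum)
        = s.map (fun c => ((s.erase c).powerset.map (fun D => F c D)).sum
            + ((s.erase c).powerset.map (fun D => F c (a ::ₘ D))).sum) := by
      apply Multiset.map_congr rfl
      intro c hc
      rw [herase c hc, Multiset.powerset_cons, Multiset.map_add, Multiset.sum_add,
          Multiset.map_map]
      rfl
    rw [h3, Multiset.sum_map_add]
    ac_rfl

/-- Exchange: sum over submultisets then over elements of the submultiset. -/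
lemma exchange_mem (C : Multiset ℕ) (F : ℕ → Multiset ℕ → ℕ) :
    (C.powerset.map (fun C' => (C'.map (fun c => F c C')).sum)).sum
      = (C.map (fun c => (((C.erase c).powerset).map (fun D => F c (c ::ₘ D))).sum)).sum := by
  induction C using Multiset.induction generalizing F with
  | empty => simp
  | cons a s ih =>
    have herase : ∀ c ∈ s, (a ::ₘ s).erase c = a ::ₘ s.erase c := by
      intro c hc
      by_cases hac : c = a
      · subst hac; rw [Multiset.erase_cons_head, Multiset.cons_erase hc]
      · rw [Multiset.erase_cons_tail]; exact fun h => hac h.symm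
    rw [Multiset.powerset_cons, Multiset.map_add, Multiset.sum_add, Multiset.map_map]
    have h2 : s.powerset.map ((fun C' => (C'.map (fun c => F c C')).sum) ∘ Multiset.cons a)
        = s.powerset.map (fun C' => F a (a ::ₘ C')
            + (C'.map (fun c => F c (a ::ₘ C'))).sum) := by
      apply Multiset.map_congr rfl
      intro C' _
      simp only [Function.comp]
      rw [Multiset.map_cons, Multiset.sum_cons]
    rw [h2, Multiset.sum_map_add, ih F, ih (fun c D => F c (a ::ₘ D))]
    rw [Multiset.map_cons, Multiset.sum_cons, Multiset.erase_cons_head]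
    have h3 : s.map (fun c => (((a ::ₘ s).erase c).powerset.map
          (fun D => F c (c ::ₘ D))).sum)
        = s.map (fun c => ((s.erase c).powerset.map (fun D => F c (c ::ₘ D))).sum
            + ((s.erase c).powerset.map (fun D => F c (c ::ₘ a ::ₘ D))).sum) := by
      apply Multiset.map_congr rfl
      intro c hc
      rw [herase c hc, Multiset.powerset_cons, Multiset.map_add, Multiset.sum_add,
          Multiset.map_map]
      rfl
    rw [h3, Multiset.sum_map_add]
    have h4 : (s.map (fun c => ((s.erase c).powerset.map
          (fun D => F c (a ::ₘ (c ::ₘ D)))).sum)).sum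
        = (s.map (fun c => ((s.erase c).powerset.map
          (fun D => F c (c ::ₘ a ::ₘ D))).sum)).sum := by
      congr 1
      apply Multiset.map_congr rfl
      intro c _
      congr 1
      apply Multiset.map_congr rfl
      intro D _
      rw [Multiset.cons_swap]
    rw [h4]
    ac_rfl




lemma STN_zero (C : Multiset ℕ) (h : C ≠ 0) :
    STN C 0 = (C.map (fun c => 2 * c * STN (C.erase c) c)).sum := by
  rw [STN, if_neg h, attach_sum C (fun c => 2 * c * STN (C.erase c) c)]

lemma STN_succ (C : Multiset ℕ) (η : ℕ) :
    STN C (η + 1) = STN C η + (C.map (fun c => 2 * c * STN (C.erase c) (η + 1 + c))).sum := by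
  rw [STN, attach_sum C (fun c => 2 * c * STN (C.erase c) (η + 1 + c))]

/-- The inner powerset sum. -/
def gfun (C : Multiset ℕ) (M t η : ℕ) : ℕ :=
  ((C.powerset).map (fun C' =>
    Nat.choose M (C'.sum + Multiset.card C' + η) * STN C' η * STN (C - C') (t - η))).sum

/-- The G-term of the STMW recursion. -/
def Gt (C : Multiset ℕ) (a b : ℕ) : ℕ :=
  ∑ η ∈ Finset.range a,
    4 * gfun C (C.sum + Multiset.card C + a + b - 1) (a + b - 1) η

lemma STMW_m_zero (C : Multiset ℕ) (w : ℕ) : STMW C 0 w = 0 := by rw [STMW]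
lemma STMW_w_zero (C : Multiset ℕ) (m : ℕ) : STMW C m 0 = 0 := by
  cases m with
  | zero => rw [STMW]
  | succ m => rw [STMW]

lemma STMW_succ_succ (C : Multiset ℕ) (m w : ℕ) :
    STMW C (m + 1) (w + 1) =
      2 * STMW C (m + 1) w
      + (C.map (fun c => 4 * c * STMW (C.erase c) (m + 1) (w + 1 + c))).sum
      + Gt C (m + 1) (w + 1) := by
  rw [STMW, attach_sum C (fun c => 4 * c * STMW (C.erase c) (m + 1) (w + 1 + c))]
  congr 1
  unfold Gt gfun
  apply Finset.sum_congr rfl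
  intro η hη
  congr 1
  apply congrArg
  apply Multiset.map_congr rfl
  intro C' _
  have h1 : C.sum + Multiset.card C + (m + 1) + (w + 1) - 1
      = C.sum + Multiset.card C + (m + 1) + (w + 1) - 1 := rfl
  have h2 : (m + 1) + (w + 1) - η - 1 = (m + 1) + (w + 1) - 1 - η := by omega
  rw [h2]




/-- Reflection symmetry of `gfun` when the binomial top matches `sum + card + t`. -/
lemma gfun_reflect (C : Multiset ℕ) (t η : ℕ) (hη : η ≤ t) :
    gfun C (C.sum + Multiset.card C + t) t η
      = gfun C (C.sum + Multiset.card C + t) t (t - η) := by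
  set M := C.sum + Multiset.card C + t with hM
  unfold gfun
  rw [powerset_compl C (fun C' =>
    Nat.choose M (C'.sum + Multiset.card C' + (t - η)) * STN C' (t - η)
      * STN (C - C') (t - (t - η)))]
  apply congrArg
  apply Multiset.map_congr rfl
  intro C' hC'
  rw [Multiset.mem_powerset] at hC'
  have hcc : C - (C - C') = C' := tsub_tsub_cancel_of_le hC'
  have hadd : (C - C') + C' = C := tsub_add_cancel_of_le hC'
  have hsum : (C - C').sum + C'.sum = C.sum := by
    rw [← Multiset.sum_add, hadd]
  have hcard : Multiset.card (C - C') + Multiset.card C' = Multiset.card C := by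
    rw [← Multiset.card_add, hadd]
  have htt : t - (t - η) = η := by omega
  rw [hcc, htt]
  have hidx : (C - C').sum + Multiset.card (C - C') + (t - η)
      = M - (C'.sum + Multiset.card C' + η) := by omega
  have hle : C'.sum + Multiset.card C' + η ≤ M := by omega
  rw [hidx, Nat.choose_symm hle]
  ring





lemma sub_erase (C C' : Multiset ℕ) (c : ℕ) :
    (C - C').erase c = (C.erase c) - C' := by
  rw [← Multiset.sub_singleton, ← Multiset.sub_singleton, tsub_tsub, tsub_tsub, add_comm]

lemma mul_sum_mul (a b : ℕ) (s : Multiset ℕ) (f : ℕ → ℕ) :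
    a * (s.map f).sum * b = (s.map (fun c => a * f c * b)).sum := by
  calc a * (s.map f).sum * b = a * ((s.map (fun c => f c * b)).sum) := by
        rw [Multiset.sum_map_mul_right, mul_assoc]
    _ = (s.map (fun c => a * (f c * b))).sum := (Multiset.sum_map_mul_left).symm
    _ = (s.map (fun c => a * f c * b)).sum := by
        exact congrArg _ (Multiset.map_congr rfl (fun c _ => by ring))

/-- Core decomposition, successor case. -/
lemma gfun_succ_succ (C : Multiset ℕ) (M P η' : ℕ) (h : η' + 1 ≤ P) :
    gfun C (M+1) (P+1) (η'+1)
      = gfun C M P (η'+1) + gfun C M P η'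
        + (C.map (fun c => 2*c*(gfun (C.erase c) M (P+1+c) (η'+1)
            + gfun (C.erase c) M (P+1+c) (η'+1+c)))).sum := by
  have point : ∀ C' ∈ C.powerset,
      Nat.choose (M+1) (C'.sum + Multiset.card C' + (η'+1)) * STN C' (η'+1)
          * STN (C - C') ((P+1) - (η'+1))
      = (Nat.choose M (C'.sum + Multiset.card C' + (η'+1)) * STN C' (η'+1)
            * STN (C - C') (P - (η'+1))
        + Nat.choose M (C'.sum + Multiset.card C' + η') * STN C' η'
            * STN (C - C') (P - η'))
        + (Nat.choose M (C'.sum + Multiset.card C' + (η'+1)) * STN C' (η'+1)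
            * ((C - C').map (fun c => 2*c*STN ((C - C').erase c) ((P - (η'+1)) + 1 + c))).sum
        + Nat.choose M (C'.sum + Multiset.card C' + η')
            * ((C'.map (fun c => 2*c*STN (C'.erase c) (η'+1+c))).sum)
            * STN (C - C') (P - η')) := by
    intro C' _
    have e1 : C'.sum + Multiset.card C' + (η'+1) = (C'.sum + Multiset.card C' + η') + 1 := by
      omega
    have e2 : (P+1) - (η'+1) = P - η' := by omega
    have e3 : P - η' = (P - (η'+1)) + 1 := by omega
    rw [e1, Nat.choose_succ_succ, e2, e3, STN_succ (C - C') (P - (η'+1)), STN_succ C' η']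
    ring
  have hT3 : (C.powerset.map (fun C' =>
      Nat.choose M (C'.sum + Multiset.card C' + (η'+1)) * STN C' (η'+1)
        * ((C - C').map (fun c => 2*c*STN ((C - C').erase c) ((P - (η'+1)) + 1 + c))).sum)).sum
      = (C.map (fun c => 2*c*gfun (C.erase c) M (P+1+c) (η'+1))).sum := by
    have step1 : C.powerset.map (fun C' =>
        Nat.choose M (C'.sum + Multiset.card C' + (η'+1)) * STN C' (η'+1)
          * ((C - C').map (fun c => 2*c*STN ((C - C').erase c) ((P - (η'+1)) + 1 + c))).sum)
        = C.powerset.map (fun C' => ((C - C').map (fun c =>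
            2*c*(Nat.choose M (C'.sum + Multiset.card C' + (η'+1)) * STN C' (η'+1)
              * STN ((C.erase c) - C') ((P+1+c) - (η'+1))))).sum) := by
      apply Multiset.map_congr rfl
      intro C' _
      rw [← Multiset.sum_map_mul_left]
      apply congrArg
      apply Multiset.map_congr rfl
      intro c _
      rw [sub_erase]
      have e4 : (P - (η'+1)) + 1 + c = (P+1+c) - (η'+1) := by omega
      rw [e4]; ring
    rw [step1, exchange_compl C (fun c C' =>
        2*c*(Nat.choose M (C'.sum + Multiset.card C' + (η'+1)) * STN C' (η'+1)
          * STN ((C.erase c) - C') ((P+1+c) - (η'+1))))]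
    apply congrArg
    apply Multiset.map_congr rfl
    intro c _
    rw [Multiset.sum_map_mul_left]
    rfl
  have hT4 : (C.powerset.map (fun C' =>
      Nat.choose M (C'.sum + Multiset.card C' + η')
        * ((C'.map (fun c => 2*c*STN (C'.erase c) (η'+1+c))).sum)
        * STN (C - C') (P - η'))).sum
      = (C.map (fun c => 2*c*gfun (C.erase c) M (P+1+c) (η'+1+c))).sum := by
    have step1 : C.powerset.map (fun C' =>
        Nat.choose M (C'.sum + Multiset.card C' + η')
          * ((C'.map (fun c => 2*c*STN (C'.erase c) (η'+1+c))).sum)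
          * STN (C - C') (P - η'))
        = C.powerset.map (fun C' => (C'.map (fun c =>
            2*c*(Nat.choose M (C'.sum + Multiset.card C' + η')
              * STN (C'.erase c) (η'+1+c) * STN (C - C') (P - η')))).sum) := by
      apply Multiset.map_congr rfl
      intro C' _
      rw [mul_sum_mul]
      apply congrArg
      apply Multiset.map_congr rfl
      intro c _
      ring
    rw [step1, exchange_mem C (fun c C' =>
        2*c*(Nat.choose M (C'.sum + Multiset.card C' + η')
          * STN (C'.erase c) (η'+1+c) * STN (C - C') (P - η')))]
    apply congrArg
    apply Multiset.map_congr rfl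
    intro c _
    rw [Multiset.sum_map_mul_left]
    apply congrArg
    unfold gfun
    apply congrArg
    apply Multiset.map_congr rfl
    intro D _
    rw [Multiset.erase_cons_head, Multiset.sub_cons, Multiset.sum_cons,
        Multiset.card_cons]
    have e5 : c + D.sum + (Multiset.card D + 1) + η' = D.sum + Multiset.card D + (η'+1+c) := by
      omega
    have e6 : P - η' = (P+1+c) - (η'+1+c) := by omega
    rw [e5, e6]
  calc gfun C (M+1) (P+1) (η'+1)
      = (C.powerset.map (fun C' =>
          (Nat.choose M (C'.sum + Multiset.card C' + (η'+1)) * STN C' (η'+1)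
              * STN (C - C') (P - (η'+1))
          + Nat.choose M (C'.sum + Multiset.card C' + η') * STN C' η'
              * STN (C - C') (P - η'))
          + (Nat.choose M (C'.sum + Multiset.card C' + (η'+1)) * STN C' (η'+1)
              * ((C - C').map (fun c => 2*c*STN ((C - C').erase c) ((P - (η'+1)) + 1 + c))).sum
          + Nat.choose M (C'.sum + Multiset.card C' + η')
              * ((C'.map (fun c => 2*c*STN (C'.erase c) (η'+1+c))).sum)
              * STN (C - C') (P - η')))).sum := by
        unfold gfun
        exact congrArg _ (Multiset.map_congr rfl point)
    _ = ((C.powerset.map (fun C' =>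
            Nat.choose M (C'.sum + Multiset.card C' + (η'+1)) * STN C' (η'+1)
              * STN (C - C') (P - (η'+1)))).sum
        + (C.powerset.map (fun C' =>
            Nat.choose M (C'.sum + Multiset.card C' + η') * STN C' η'
              * STN (C - C') (P - η'))).sum)
        + ((C.powerset.map (fun C' =>
            Nat.choose M (C'.sum + Multiset.card C' + (η'+1)) * STN C' (η'+1)
              * ((C - C').map (fun c =>
                  2*c*STN ((C - C').erase c) ((P - (η'+1)) + 1 + c))).sum)).sum
          + (C.powerset.map (fun C' =>
              Nat.choose M (C'.sum + Multiset.card C' + η')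
                * ((C'.map (fun c => 2*c*STN (C'.erase c) (η'+1+c))).sum)
                * STN (C - C') (P - η'))).sum) := by
        rw [Multiset.sum_map_add, Multiset.sum_map_add, Multiset.sum_map_add]
    _ = gfun C M P (η'+1) + gfun C M P η'
        + (C.map (fun c => 2*c*(gfun (C.erase c) M (P+1+c) (η'+1)
            + gfun (C.erase c) M (P+1+c) (η'+1+c)))).sum := by
        rw [hT3, hT4]
        have hm : C.map (fun c => 2*c*gfun (C.erase c) M (P+1+c) (η'+1)
              + 2*c*gfun (C.erase c) M (P+1+c) (η'+1+c))
            = C.map (fun c => 2*c*(gfun (C.erase c) M (P+1+c) (η'+1)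
              + gfun (C.erase c) M (P+1+c) (η'+1+c))) :=
          Multiset.map_congr rfl (fun c _ => by ring)
        congr 1
        rw [← hm, Multiset.sum_map_add]

/-- Core decomposition, zero case. -/
lemma gfun_succ_zero (C : Multiset ℕ) (M P : ℕ) :
    gfun C (M+1) (P+1) 0
      = gfun C M P 0
        + (C.map (fun c => 2*c*(gfun (C.erase c) M (P+1+c) 0
            + gfun (C.erase c) M (P+1+c) c))).sum := by
  have point : ∀ C' ∈ C.powerset,
      Nat.choose (M+1) (C'.sum + Multiset.card C' + 0) * STN C' 0
          * STN (C - C') ((P+1) - 0)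
      = Nat.choose M (C'.sum + Multiset.card C' + 0) * STN C' 0
            * STN (C - C') (P - 0)
        + (Nat.choose M (C'.sum + Multiset.card C' + 0) * STN C' 0
            * ((C - C').map (fun c => 2*c*STN ((C - C').erase c) (P + 1 + c))).sum
        + (C'.map (fun c => 2*c*(Nat.choose M ((C'.erase c).sum
              + Multiset.card (C'.erase c) + c)
            * STN (C'.erase c) c * STN (C - C') (P+1)))).sum) := by
    intro C' _
    simp only [Nat.add_zero, Nat.sub_zero]
    by_cases hC' : C' = 0
    · subst hC'
      simp only [Multiset.sum_zero, Multiset.card_zero, Multiset.map_zero,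
        Multiset.sum_zero, Nat.add_zero, Multiset.sub_zero, Nat.zero_add]
      rw [STN_succ C P]
      simp [Nat.choose_zero_right]
      ring
    · obtain ⟨y, hy⟩ : ∃ y, C'.sum + Multiset.card C' = y + 1 := by
        refine ⟨C'.sum + Multiset.card C' - 1, ?_⟩
        have : Multiset.card C' ≠ 0 := by
          simp only [ne_eq, Multiset.card_eq_zero]; exact hC'
        omega
      rw [hy, Nat.choose_succ_succ, STN_zero C' hC']
      have hmap : (C'.map (fun c => 2*c*(Nat.choose M ((C'.erase c).sum
              + Multiset.card (C'.erase c) + c)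
            * STN (C'.erase c) c * STN (C - C') (P+1)))).sum
          = Nat.choose M y * (C'.map (fun c => 2*c*STN (C'.erase c) c)).sum
              * STN (C - C') (P+1) := by
        rw [mul_sum_mul]
        apply congrArg
        apply Multiset.map_congr rfl
        intro c hc
        have hce : c ::ₘ C'.erase c = C' := Multiset.cons_erase hc
        have hs : c + (C'.erase c).sum = C'.sum := by
          rw [← Multiset.sum_cons, hce]
        have hk : Multiset.card (C'.erase c) + 1 = Multiset.card C' := by
          rw [← Multiset.card_cons, hce]
        have e7 : (C'.erase c).sum + Multiset.card (C'.erase c) + c = y := by omega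
        rw [e7]; ring
      rw [hmap, STN_succ (C - C') P]
      ring
  have hT3 : (C.powerset.map (fun C' =>
      Nat.choose M (C'.sum + Multiset.card C' + 0) * STN C' 0
        * ((C - C').map (fun c => 2*c*STN ((C - C').erase c) (P + 1 + c))).sum)).sum
      = (C.map (fun c => 2*c*gfun (C.erase c) M (P+1+c) 0)).sum := by
    have step1 : C.powerset.map (fun C' =>
        Nat.choose M (C'.sum + Multiset.card C' + 0) * STN C' 0
          * ((C - C').map (fun c => 2*c*STN ((C - C').erase c) (P + 1 + c))).sum)
        = C.powerset.map (fun C' => ((C - C').map (fun c =>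
            2*c*(Nat.choose M (C'.sum + Multiset.card C' + 0) * STN C' 0
              * STN ((C.erase c) - C') ((P+1+c) - 0)))).sum) := by
      apply Multiset.map_congr rfl
      intro C' _
      rw [← Multiset.sum_map_mul_left]
      apply congrArg
      apply Multiset.map_congr rfl
      intro c _
      rw [sub_erase]
      have e4 : P + 1 + c = (P+1+c) - 0 := by omega
      rw [← e4]; ring
    rw [step1, exchange_compl C (fun c C' =>
        2*c*(Nat.choose M (C'.sum + Multiset.card C' + 0) * STN C' 0
          * STN ((C.erase c) - C') ((P+1+c) - 0)))]
    apply congrArg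
    apply Multiset.map_congr rfl
    intro c _
    rw [Multiset.sum_map_mul_left]
    rfl
  have hT4 : (C.powerset.map (fun C' =>
      (C'.map (fun c => 2*c*(Nat.choose M ((C'.erase c).sum
            + Multiset.card (C'.erase c) + c)
          * STN (C'.erase c) c * STN (C - C') (P+1)))).sum)).sum
      = (C.map (fun c => 2*c*gfun (C.erase c) M (P+1+c) c)).sum := by
    rw [exchange_mem C (fun c C' =>
        2*c*(Nat.choose M ((C'.erase c).sum + Multiset.card (C'.erase c) + c)
          * STN (C'.erase c) c * STN (C - C') (P+1)))]
    apply congrArg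
    apply Multiset.map_congr rfl
    intro c _
    rw [Multiset.sum_map_mul_left]
    apply congrArg
    unfold gfun
    apply congrArg
    apply Multiset.map_congr rfl
    intro D _
    rw [Multiset.erase_cons_head, Multiset.sub_cons]
    have e6 : P + 1 = (P+1+c) - c := by omega
    rw [← e6]
  calc gfun C (M+1) (P+1) 0
      = (C.powerset.map (fun C' =>
          Nat.choose M (C'.sum + Multiset.card C' + 0) * STN C' 0
              * STN (C - C') (P - 0)
          + (Nat.choose M (C'.sum + Multiset.card C' + 0) * STN C' 0
              * ((C - C').map (fun c => 2*c*STN ((C - C').erase c) (P + 1 + c))).sum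
          + (C'.map (fun c => 2*c*(Nat.choose M ((C'.erase c).sum
                + Multiset.card (C'.erase c) + c)
              * STN (C'.erase c) c * STN (C - C') (P+1)))).sum))).sum := by
        unfold gfun
        exact congrArg _ (Multiset.map_congr rfl point)
    _ = (C.powerset.map (fun C' =>
            Nat.choose M (C'.sum + Multiset.card C' + 0) * STN C' 0
              * STN (C - C') (P - 0))).sum
        + ((C.powerset.map (fun C' =>
            Nat.choose M (C'.sum + Multiset.card C' + 0) * STN C' 0
              * ((C - C').map (fun c => 2*c*STN ((C - C').erase c) (P + 1 + c))).sum)).sum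
          + (C.powerset.map (fun C' =>
              (C'.map (fun c => 2*c*(Nat.choose M ((C'.erase c).sum
                    + Multiset.card (C'.erase c) + c)
                  * STN (C'.erase c) c * STN (C - C') (P+1)))).sum)).sum) := by
        rw [Multiset.sum_map_add, Multiset.sum_map_add]
    _ = gfun C M P 0
        + (C.map (fun c => 2*c*(gfun (C.erase c) M (P+1+c) 0
            + gfun (C.erase c) M (P+1+c) c))).sum := by
        rw [hT3, hT4]
        have hm : C.map (fun c => 2*c*gfun (C.erase c) M (P+1+c) 0
              + 2*c*gfun (C.erase c) M (P+1+c) c)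
            = C.map (fun c => 2*c*(gfun (C.erase c) M (P+1+c) 0
              + gfun (C.erase c) M (P+1+c) c)) :=
          Multiset.map_congr rfl (fun c _ => by ring)
        congr 1
        rw [← hm, Multiset.sum_map_add]





lemma sum_range_add' (f : ℕ → ℕ) (m n : ℕ) :
    ∑ i ∈ Finset.range (m + n), f i
      = (∑ i ∈ Finset.range m, f i) + ∑ i ∈ Finset.range n, f (m + i) := by
  induction n with
  | zero => simp
  | succ n ih =>
    rw [← Nat.add_assoc, Finset.sum_range_succ, ih, Finset.sum_range_succ, Nat.add_assoc]

lemma sum_reflect (v : ℕ → ℕ) (t : ℕ) (hv : ∀ η, η ≤ t → v η = v (t - η)) (a b : ℕ)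
    (hab : a + b = t + 1) :
    ∑ i ∈ Finset.range a, v i = ∑ i ∈ Finset.Ico b (t + 1), v i := by
  apply Finset.sum_nbij' (i := fun i => t - i) (j := fun j => t - j)
  · intro i hi
    rw [Finset.mem_range] at hi
    rw [Finset.mem_Ico]
    omega
  · intro j hj
    rw [Finset.mem_Ico] at hj
    rw [Finset.mem_range]
    omega
  · intro i hi
    rw [Finset.mem_range] at hi
    omega
  · intro j hj
    rw [Finset.mem_Ico] at hj
    omega
  · intro i hi
    rw [Finset.mem_range] at hi
    exact hv i (by omega)

lemma sum_pair (v : ℕ → ℕ) (t : ℕ) (hv : ∀ η, η ≤ t → v η = v (t - η)) (a b : ℕ)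
    (hab : a + b = t + 1) :
    (∑ i ∈ Finset.range a, v i) + (∑ i ∈ Finset.range b, v i)
      = ∑ i ∈ Finset.range (t + 1), v i := by
  rw [sum_reflect v t hv a b hab, Finset.range_eq_Ico, add_comm]
  rw [Finset.range_eq_Ico]
  exact Finset.sum_Ico_consecutive v (m := 0) (n := b) (k := t + 1) (by omega) (by omega)

/-- The per-crown sum identity. -/
lemma per_c (v : ℕ → ℕ) (t : ℕ) (hv : ∀ η, η ≤ t → v η = v (t - η)) (m w c : ℕ)
    (ht : t = m + w + c + 1) :
    (∑ i ∈ Finset.range (m+1), v i) + (∑ i ∈ Finset.range (m+1), v (i + c))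
      + 2 * (∑ i ∈ Finset.range (w+1+c), v i)
    = (∑ i ∈ Finset.range (w+1), v i) + (∑ i ∈ Finset.range (w+1), v (i + c))
      + 2 * (∑ i ∈ Finset.range (m+1+c), v i) := by
  have h1 : (∑ i ∈ Finset.range c, v i) + (∑ i ∈ Finset.range (m+1), v (i + c))
      = ∑ i ∈ Finset.range (m+1+c), v i := by
    have := sum_range_add' v c (m+1)
    have hc : c + (m+1) = m+1+c := by omega
    rw [hc] at this
    rw [this]
    congr 1
    apply Finset.sum_congr rfl
    intro i _
    rw [Nat.add_comm c i]
  have h2 : (∑ i ∈ Finset.range c, v i) + (∑ i ∈ Finset.range (w+1), v (i + c))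
      = ∑ i ∈ Finset.range (w+1+c), v i := by
    have := sum_range_add' v c (w+1)
    have hc : c + (w+1) = w+1+c := by omega
    rw [hc] at this
    rw [this]
    congr 1
    apply Finset.sum_congr rfl
    intro i _
    rw [Nat.add_comm c i]
  have h3 : (∑ i ∈ Finset.range (m+1), v i) + (∑ i ∈ Finset.range (w+1+c), v i)
      = ∑ i ∈ Finset.range (t+1), v i := sum_pair v t hv _ _ (by omega)
  have h4 : (∑ i ∈ Finset.range (w+1), v i) + (∑ i ∈ Finset.range (m+1+c), v i)
      = ∑ i ∈ Finset.range (t+1), v i := sum_pair v t hv _ _ (by omega)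
  omega

/-- Swap a Finset sum with a multiset map sum. -/
lemma sum_swap_fm (s : Finset ℕ) (C : Multiset ℕ) (f : ℕ → ℕ → ℕ) :
    ∑ η ∈ s, (C.map (f η)).sum = (C.map (fun c => ∑ η ∈ s, f η c)).sum := by
  induction s using Finset.cons_induction with
  | empty => simp
  | cons a s ha ih =>
    rw [Finset.sum_cons, ih, ← Multiset.sum_map_add]
    apply congrArg
    apply Multiset.map_congr rfl
    intro c _
    rw [Finset.sum_cons]

/-- DECOMP: the summed form of the core decomposition. -/
lemma DECOMP (C : Multiset ℕ) (M P μ : ℕ) (h : μ ≤ P) :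
    ∑ η ∈ Finset.range (μ+1), gfun C (M+1) (P+1) η
      = 2 * (∑ η ∈ Finset.range μ, gfun C M P η) + gfun C M P μ
        + (C.map (fun c => 2*c*((∑ η ∈ Finset.range (μ+1), gfun (C.erase c) M (P+1+c) η)
            + ∑ η ∈ Finset.range (μ+1), gfun (C.erase c) M (P+1+c) (η+c)))).sum := by
  have expand : ∑ η ∈ Finset.range (μ+1), gfun C (M+1) (P+1) η
      = (∑ η ∈ Finset.range (μ+1), gfun C M P η)
        + (∑ η ∈ Finset.range μ, gfun C M P η)
        + ∑ η ∈ Finset.range (μ+1),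
            (C.map (fun c => 2*c*(gfun (C.erase c) M (P+1+c) η
              + gfun (C.erase c) M (P+1+c) (η+c)))).sum := by
    rw [Finset.sum_range_succ' (fun η => gfun C (M+1) (P+1) η) μ]
    have hsucc : ∀ i ∈ Finset.range μ, gfun C (M+1) (P+1) (i+1)
        = gfun C M P (i+1) + gfun C M P i
          + (C.map (fun c => 2*c*(gfun (C.erase c) M (P+1+c) (i+1)
              + gfun (C.erase c) M (P+1+c) (i+1+c)))).sum := by
      intro i hi
      rw [Finset.mem_range] at hi
      exact gfun_succ_succ C M P i (by omega)
    rw [Finset.sum_congr rfl hsucc, gfun_succ_zero C M P]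
    rw [Finset.sum_add_distrib, Finset.sum_add_distrib]
    rw [Finset.sum_range_succ' (fun η => gfun C M P η) μ]
    rw [Finset.sum_range_succ' (fun η => (C.map (fun c =>
        2*c*(gfun (C.erase c) M (P+1+c) η + gfun (C.erase c) M (P+1+c) (η+c)))).sum) μ]
    have hz : (C.map (fun c => 2*c*(gfun (C.erase c) M (P+1+c) 0
        + gfun (C.erase c) M (P+1+c) c))).sum
        = (C.map (fun c => 2*c*(gfun (C.erase c) M (P+1+c) 0
        + gfun (C.erase c) M (P+1+c) (0+c)))).sum := by
      apply congrArg
      apply Multiset.map_congr rfl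
      intro c _
      rw [Nat.zero_add]
    rw [hz]
    ring
  rw [expand, Finset.sum_range_succ (fun η => gfun C M P η) μ]
  rw [sum_swap_fm (Finset.range (μ+1)) C (fun η c => 2*c*(gfun (C.erase c) M (P+1+c) η
      + gfun (C.erase c) M (P+1+c) (η+c)))]
  have hfinal : (C.map (fun c => ∑ η ∈ Finset.range (μ+1),
      2*c*(gfun (C.erase c) M (P+1+c) η + gfun (C.erase c) M (P+1+c) (η+c)))).sum
      = (C.map (fun c => 2*c*((∑ η ∈ Finset.range (μ+1), gfun (C.erase c) M (P+1+c) η)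
          + ∑ η ∈ Finset.range (μ+1), gfun (C.erase c) M (P+1+c) (η+c)))).sum := by
    apply congrArg
    apply Multiset.map_congr rfl
    intro c _
    rw [← Finset.mul_sum, Finset.sum_add_distrib]
  rw [hfinal]
  ring





/-- The key G-term identity (★). -/
lemma star (C : Multiset ℕ) (m w : ℕ) :
    Gt C (m+1) (w+1) + 2 * Gt C w (m+1)
      + (C.map (fun c => 4*c*Gt (C.erase c) (w+1+c) (m+1))).sum
    = Gt C (w+1) (m+1) + 2 * Gt C m (w+1)
      + (C.map (fun c => 4*c*Gt (C.erase c) (m+1+c) (w+1))).sum := by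
  -- normalizations
  have n1 : Gt C (m+1) (w+1) = ∑ η ∈ Finset.range (m+1), 4 * gfun C ((C.sum + Multiset.card C + (m+w) + 1)) (m+w+1) η := by
    unfold Gt
    have e1 : C.sum + Multiset.card C + (m+1) + (w+1) - 1 = (C.sum + Multiset.card C + (m+w) + 1) := by omega
    have e2 : (m+1) + (w+1) - 1 = (m+w+1) := by omega
    rw [e1, e2]
  have n1' : Gt C (w+1) (m+1) = ∑ η ∈ Finset.range (w+1), 4 * gfun C ((C.sum + Multiset.card C + (m+w) + 1)) (m+w+1) η := by
    unfold Gt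
    have e1 : C.sum + Multiset.card C + (w+1) + (m+1) - 1 = (C.sum + Multiset.card C + (m+w) + 1) := by omega
    have e2 : (w+1) + (m+1) - 1 = (m+w+1) := by omega
    rw [e1, e2]
  have n2 : Gt C w (m+1) = ∑ η ∈ Finset.range w, 4 * gfun C ((C.sum + Multiset.card C + (m+w))) (m+w) η := by
    unfold Gt
    have e1 : C.sum + Multiset.card C + w + (m+1) - 1 = (C.sum + Multiset.card C + (m+w)) := by omega
    have e2 : w + (m+1) - 1 = (m+w) := by omega
    rw [e1, e2]
  have n2' : Gt C m (w+1) = ∑ η ∈ Finset.range m, 4 * gfun C ((C.sum + Multiset.card C + (m+w))) (m+w) η := by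
    unfold Gt
    have e1 : C.sum + Multiset.card C + m + (w+1) - 1 = (C.sum + Multiset.card C + (m+w)) := by omega
    have e2 : m + (w+1) - 1 = (m+w) := by omega
    rw [e1, e2]
  have etop : ∀ c ∈ C,
      (C.erase c).sum + Multiset.card (C.erase c) + ((m+w+1+c)) = C.sum + Multiset.card C + (m+w) := by
    intro c hc
    have hce : c ::ₘ C.erase c = C := Multiset.cons_erase hc
    have hs : c + (C.erase c).sum = C.sum := by rw [← Multiset.sum_cons, hce]
    have hk : Multiset.card (C.erase c) + 1 = Multiset.card C := by
      rw [← Multiset.card_cons, hce]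
    rw [← hs, ← hk]; ring
  have n3 : (C.map (fun c => 4*c*Gt (C.erase c) (w+1+c) (m+1))).sum
      = (C.map (fun c => 4*c*∑ η ∈ Finset.range (w+1+c),
          4 * gfun (C.erase c) ((C.sum + Multiset.card C + (m+w))) ((m+w+1+c)) η)).sum := by
    apply congrArg
    apply Multiset.map_congr rfl
    intro c hc
    unfold Gt
    have e1 : (C.erase c).sum + Multiset.card (C.erase c) + (w+1+c) + (m+1) - 1 = (C.sum + Multiset.card C + (m+w)) := by
      have := etop c hc
      omega
    have e2 : (w+1+c) + (m+1) - 1 = (m+w+1+c) := by omega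
    rw [e1, e2]
  have n3' : (C.map (fun c => 4*c*Gt (C.erase c) (m+1+c) (w+1))).sum
      = (C.map (fun c => 4*c*∑ η ∈ Finset.range (m+1+c),
          4 * gfun (C.erase c) ((C.sum + Multiset.card C + (m+w))) ((m+w+1+c)) η)).sum := by
    apply congrArg
    apply Multiset.map_congr rfl
    intro c hc
    unfold Gt
    have e1 : (C.erase c).sum + Multiset.card (C.erase c) + (m+1+c) + (w+1) - 1 = (C.sum + Multiset.card C + (m+w)) := by
      have := etop c hc
      omega
    have e2 : (m+1+c) + (w+1) - 1 = (m+w+1+c) := by omega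
    rw [e1, e2]
  rw [n1, n1', n2, n2', n3, n3']
  -- DECOMP applications
  have hd1 : ∑ η ∈ Finset.range (m+1), 4 * gfun C ((C.sum + Multiset.card C + (m+w) + 1)) (m+w+1) η
      = 4*(2 * (∑ η ∈ Finset.range m, gfun C ((C.sum + Multiset.card C + (m+w))) (m+w) η) + gfun C ((C.sum + Multiset.card C + (m+w))) (m+w) m
        + (C.map (fun c => 2*c*((∑ η ∈ Finset.range (m+1), gfun (C.erase c) ((C.sum + Multiset.card C + (m+w))) ((m+w+1+c)) η)
            + ∑ η ∈ Finset.range (m+1), gfun (C.erase c) ((C.sum + Multiset.card C + (m+w))) ((m+w+1+c)) (η+c)))).sum) := by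
    rw [← Finset.mul_sum, DECOMP C ((C.sum + Multiset.card C + (m+w))) (m+w) m (by omega)]
  have hd2 : ∑ η ∈ Finset.range (w+1), 4 * gfun C ((C.sum + Multiset.card C + (m+w) + 1)) (m+w+1) η
      = 4*(2 * (∑ η ∈ Finset.range w, gfun C ((C.sum + Multiset.card C + (m+w))) (m+w) η) + gfun C ((C.sum + Multiset.card C + (m+w))) (m+w) w
        + (C.map (fun c => 2*c*((∑ η ∈ Finset.range (w+1), gfun (C.erase c) ((C.sum + Multiset.card C + (m+w))) ((m+w+1+c)) η)
            + ∑ η ∈ Finset.range (w+1), gfun (C.erase c) ((C.sum + Multiset.card C + (m+w))) ((m+w+1+c)) (η+c)))).sum) := by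
    rw [← Finset.mul_sum, DECOMP C ((C.sum + Multiset.card C + (m+w))) (m+w) w (by omega)]
  have hb1 : ∑ η ∈ Finset.range w, 4 * gfun C ((C.sum + Multiset.card C + (m+w))) (m+w) η
      = 4 * ∑ η ∈ Finset.range w, gfun C ((C.sum + Multiset.card C + (m+w))) (m+w) η := by rw [← Finset.mul_sum]
  have hb2 : ∑ η ∈ Finset.range m, 4 * gfun C ((C.sum + Multiset.card C + (m+w))) (m+w) η
      = 4 * ∑ η ∈ Finset.range m, gfun C ((C.sum + Multiset.card C + (m+w))) (m+w) η := by rw [← Finset.mul_sum]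
  -- middle value reflection
  have hmu : gfun C ((C.sum + Multiset.card C + (m+w))) (m+w) m = gfun C ((C.sum + Multiset.card C + (m+w))) (m+w) w := by
    have h := gfun_reflect C (m+w) m (by omega)
    have e : (m+w) - m = w := by omega
    rw [e] at h
    exact h
  -- per-crown identity combined over the multiset
  have hmap : 4*(C.map (fun c => 2*c*((∑ η ∈ Finset.range (m+1), gfun (C.erase c) ((C.sum + Multiset.card C + (m+w))) ((m+w+1+c)) η)
            + ∑ η ∈ Finset.range (m+1), gfun (C.erase c) ((C.sum + Multiset.card C + (m+w))) ((m+w+1+c)) (η+c)))).sum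
        + (C.map (fun c => 4*c*∑ η ∈ Finset.range (w+1+c),
            4 * gfun (C.erase c) ((C.sum + Multiset.card C + (m+w))) ((m+w+1+c)) η)).sum
      = 4*(C.map (fun c => 2*c*((∑ η ∈ Finset.range (w+1), gfun (C.erase c) ((C.sum + Multiset.card C + (m+w))) ((m+w+1+c)) η)
            + ∑ η ∈ Finset.range (w+1), gfun (C.erase c) ((C.sum + Multiset.card C + (m+w))) ((m+w+1+c)) (η+c)))).sum
        + (C.map (fun c => 4*c*∑ η ∈ Finset.range (m+1+c),
            4 * gfun (C.erase c) ((C.sum + Multiset.card C + (m+w))) ((m+w+1+c)) η)).sum := by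
    rw [← Multiset.sum_map_mul_left, ← Multiset.sum_map_mul_left,
        ← Multiset.sum_map_add, ← Multiset.sum_map_add]
    apply congrArg
    apply Multiset.map_congr rfl
    intro c hc
    have hv : ∀ η, η ≤ (m+w+1+c) → gfun (C.erase c) ((C.sum + Multiset.card C + (m+w))) ((m+w+1+c)) η
        = gfun (C.erase c) ((C.sum + Multiset.card C + (m+w))) ((m+w+1+c)) (((m+w+1+c)) - η) := by
      intro η hη
      have h := gfun_reflect (C.erase c) ((m+w+1+c)) η hη
      have e := etop c hc
      rw [e] at h
      exact h
    have key := per_c (fun η => gfun (C.erase c) ((C.sum + Multiset.card C + (m+w))) ((m+w+1+c)) η) ((m+w+1+c)) hv m w c (by omega)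
    have hiw : ∑ η ∈ Finset.range (w+1+c), 4 * gfun (C.erase c) ((C.sum + Multiset.card C + (m+w))) ((m+w+1+c)) η
        = 4 * ∑ η ∈ Finset.range (w+1+c), gfun (C.erase c) ((C.sum + Multiset.card C + (m+w))) ((m+w+1+c)) η := by
      rw [← Finset.mul_sum]
    have him : ∑ η ∈ Finset.range (m+1+c), 4 * gfun (C.erase c) ((C.sum + Multiset.card C + (m+w))) ((m+w+1+c)) η
        = 4 * ∑ η ∈ Finset.range (m+1+c), gfun (C.erase c) ((C.sum + Multiset.card C + (m+w))) ((m+w+1+c)) η := by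
      rw [← Finset.mul_sum]
    rw [hiw, him]
    -- now linear arithmetic from key
    nlinarith [key]
  linarith [hd1, hd2, hb1, hb2, hmu, hmap]


end SymmAux
namespace SymmAux

/-- Uniform form of the defining recursion. -/
lemma ORIG (C : Multiset ℕ) (m w : ℕ) :
    STMW C m (w+1) = 2*STMW C m w
      + (C.map (fun c => 4*c*STMW (C.erase c) m (w+1+c))).sum + Gt C m (w+1) := by
  cases m with
  | zero =>
    rw [STMW_m_zero, STMW_m_zero]
    have h1 : C.map (fun c => 4*c*STMW (C.erase c) 0 (w+1+c)) = C.map (fun _ => 0) :=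
      Multiset.map_congr rfl (fun c _ => by rw [STMW_m_zero]; ring)
    rw [h1]
    simp [Gt]
  | succ m => exact STMW_succ_succ C m w

/-- The mirror recursion. -/
lemma MIRR (C : Multiset ℕ) : ∀ m w : ℕ, STMW C (m+1) w
    = 2*STMW C m w + (C.map (fun c => 4*c*STMW (C.erase c) (m+1+c) w)).sum
      + Gt C w (m+1) := by
  induction C using Multiset.strongInductionOn with
  | ih C IHC =>
    intro m w
    induction w generalizing m with
    | zero =>
      rw [STMW_w_zero, STMW_w_zero]
      have h1 : C.map (fun c => 4*c*STMW (C.erase c) (m+1+c) 0) = C.map (fun _ => 0) :=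
        Multiset.map_congr rfl (fun c _ => by rw [STMW_w_zero]; ring)
      rw [h1]
      simp [Gt]
    | succ w IHw =>
      rw [STMW_succ_succ C m w, IHw m, ORIG C m w]
      have hSa : (C.map (fun c => 4*c*STMW (C.erase c) (m+1) (w+1+c))).sum
          = 2*(C.map (fun c => 4*c*STMW (C.erase c) m (w+1+c))).sum
            + (C.map (fun c => ((C.erase c).map (fun c' =>
                4*c*(4*c'*STMW ((C.erase c).erase c') (m+1+c') (w+1+c)))).sum)).sum
            + (C.map (fun c => 4*c*Gt (C.erase c) (w+1+c) (m+1))).sum := by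
        have hpt : C.map (fun c => 4*c*STMW (C.erase c) (m+1) (w+1+c))
            = C.map (fun c => 2*(4*c*STMW (C.erase c) m (w+1+c))
                + (((C.erase c).map (fun c' =>
                    4*c*(4*c'*STMW ((C.erase c).erase c') (m+1+c') (w+1+c)))).sum
                  + 4*c*Gt (C.erase c) (w+1+c) (m+1))) := by
          apply Multiset.map_congr rfl
          intro c hc
          rw [IHC (C.erase c) (Multiset.erase_lt.mpr hc) m (w+1+c),
            Multiset.sum_map_mul_left]
          ring
        rw [hpt, Multiset.sum_map_add, Multiset.sum_map_add, Multiset.sum_map_mul_left]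
        ring
      have hSk : (C.map (fun c => 4*c*STMW (C.erase c) (m+1+c) (w+1))).sum
          = 2*(C.map (fun c => 4*c*STMW (C.erase c) (m+1+c) w)).sum
            + (C.map (fun c => ((C.erase c).map (fun c' =>
                4*c*(4*c'*STMW ((C.erase c).erase c') (m+1+c) (w+1+c')))).sum)).sum
            + (C.map (fun c => 4*c*Gt (C.erase c) (m+1+c) (w+1))).sum := by
        have hpt : C.map (fun c => 4*c*STMW (C.erase c) (m+1+c) (w+1))
            = C.map (fun c => 2*(4*c*STMW (C.erase c) (m+1+c) w)
                + (((C.erase c).map (fun c' =>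
                    4*c*(4*c'*STMW ((C.erase c).erase c') (m+1+c) (w+1+c')))).sum
                  + 4*c*Gt (C.erase c) (m+1+c) (w+1))) := by
          apply Multiset.map_congr rfl
          intro c _
          rw [ORIG (C.erase c) (m+1+c) w, Multiset.sum_map_mul_left]
          ring
        rw [hpt, Multiset.sum_map_add, Multiset.sum_map_add, Multiset.sum_map_mul_left]
        ring
      rw [hSa, hSk]
      have hswap : (C.map (fun c => ((C.erase c).map (fun c' =>
            4*c*(4*c'*STMW ((C.erase c).erase c') (m+1+c') (w+1+c)))).sum)).sum
          = (C.map (fun c => ((C.erase c).map (fun c' =>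
            4*c*(4*c'*STMW ((C.erase c).erase c') (m+1+c) (w+1+c')))).sum)).sum := by
        rw [swap_pairs C (fun c c' => 4*c*(4*c'*STMW ((C.erase c).erase c') (m+1+c') (w+1+c)))]
        apply congrArg
        apply Multiset.map_congr rfl
        intro c _
        apply congrArg
        apply Multiset.map_congr rfl
        intro c' _
        rw [Multiset.erase_comm]
        ring
      rw [hswap]
      have hstar := star C m w
      linarith [hstar]

lemma symm_aux (C : Multiset ℕ) : ∀ m w : ℕ, STMW C m w = STMW C w m := by
  induction C using Multiset.strongInductionOn with
  | ih C IHC =>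
    intro m
    induction m with
    | zero =>
      intro w
      rw [STMW_m_zero, STMW_w_zero]
    | succ m IHm =>
      intro w
      rw [MIRR C m w, ORIG C w m]
      have h1 : STMW C m w = STMW C w m := IHm w
      have h2 : (C.map (fun c => 4*c*STMW (C.erase c) (m+1+c) w)).sum
          = (C.map (fun c => 4*c*STMW (C.erase c) w (m+1+c))).sum := by
        apply congrArg
        apply Multiset.map_congr rfl
        intro c hc
        rw [IHC (C.erase c) (Multiset.erase_lt.mpr hc) (m+1+c) w]
      rw [h1, h2]

end SymmAux

/-- Symmetry of ST_MW: ST_MW(C, m, w) = ST_MW(C, w, m). -/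
theorem STMW_symm (C : Multiset ℕ) (hC : ∀ c ∈ C, 2 ≤ c) (m w : ℕ) :
    STMW C m w = STMW C w m :=
  SymmAux.symm_aux C m w
end

section
/- For all natural numbers m, w ≥ 1, one has ST_MW(∅, m, w) = ST_MW(∅, m−1, w) + ST_MW(∅, m, w−1) + 2^(m+w). That is, the numbers ST_MW(∅, m, w) satisfy a Pascal-like recurrence. (Paper's Corollary 'recmw' for the empty crown multiset.) -/
lemma STN_empty (η : ℕ) : STN 0 η = 1 := by
  induction η with
  | zero => rw [STN]; simp
  | succ n ih => rw [STN]; simp [ih]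

lemma STMW_rec1 (m w : ℕ) :
    STMW 0 m (w + 1) =
      2 * STMW 0 m w + ∑ η ∈ Finset.range m, 4 * Nat.choose (m + w) η := by
  cases m with
  | zero => simp [STMW]
  | succ M => rw [STMW]; simp [STN_empty]

lemma choose_sum_pascal (m n : ℕ) :
    ∑ η ∈ Finset.range (m + 1), Nat.choose (n + 1) η =
      ∑ η ∈ Finset.range (m + 1), Nat.choose n η +
        ∑ η ∈ Finset.range m, Nat.choose n η := by
  induction m with
  | zero => simp
  | succ k ih =>
      have h1 := Finset.sum_range_succ (fun η => Nat.choose (n + 1) η) (k + 1)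
      have h2 := Finset.sum_range_succ (fun η => Nat.choose n η) (k + 1)
      have h3 := Finset.sum_range_succ (fun η => Nat.choose n η) k
      have h4 := Nat.choose_succ_succ' n k
      omega

lemma choose_sum_pow (n : ℕ) :
    ∑ η ∈ Finset.range n, Nat.choose n η + 1 = 2 ^ n := by
  have h := Nat.sum_range_choose n
  have h2 := Finset.sum_range_succ (fun η => Nat.choose n η) n
  simp only [Nat.choose_self] at h2
  omega

lemma foursum (n k : ℕ) :
    ∑ η ∈ Finset.range k, 4 * Nat.choose n η =
      4 * ∑ η ∈ Finset.range k, Nat.choose n η := by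
  rw [Finset.mul_sum]

lemma STMW_key (W M : ℕ) :
    STMW 0 (M + 1) W + ∑ η ∈ Finset.range (M + 1), 4 * Nat.choose (M + W + 1) η =
      STMW 0 M (W + 1) + 2 ^ (M + W + 2) := by
  induction W generalizing M with
  | zero =>
      have h0 : STMW 0 (M + 1) 0 = 0 := by rw [STMW]
      have r2 := STMW_rec1 M 0
      have hm0 : STMW 0 M 0 = 0 := by
        cases M with
        | zero => rw [STMW]
        | succ k => rw [STMW]
      have h1 := choose_sum_pow (M + 1)
      have h2 := choose_sum_pow M
      have hp := choose_sum_pascal M M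
      have f1 := foursum (M + 0 + 1) (M + 1)
      have f2 := foursum (M + 0) M
      simp only [Nat.add_zero] at f1 f2 r2 ⊢
      have hpow : (2:ℕ) ^ (M + 0 + 2) = 2 * (2 ^ M * 2) := by ring
      have hpow2 : (2:ℕ) ^ (M + 1) = 2 ^ M * 2 := by ring
      rw [hpow, hpow2] at *
      omega
  | succ V ih =>
      have ih1 := ih M
      have r1 := STMW_rec1 (M + 1) V
      have r2 := STMW_rec1 M (V + 1)
      have hp := choose_sum_pascal M (M + V + 1)
      have e0 : M + 1 + V = M + V + 1 := by omega
      rw [e0] at r1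
      have e2 : M + (V + 1) = M + V + 1 := by omega
      rw [e2] at r2 ⊢
      have f1 := foursum (M + V + 1) (M + 1)
      have f2 := foursum (M + V + 1) M
      have f3 := foursum (M + V + 1 + 1) (M + 1)
      have f4 := foursum (M + V) (M + 1)
      have ep : (M + V) + 1 = M + V + 1 := rfl
      have hpow1 : (2:ℕ) ^ (M + V + 1 + 2) = 2 * 2 ^ (M + V + 2) := by ring
      have hpc := choose_sum_pascal M (M + V)
      have f5 := foursum (M + V) M
      omega

/-- Pascal-like recurrence for ST_MW(∅, m, w). -/
theorem STMW_empty_rec (m w : ℕ) (hm : 1 ≤ m) (hw : 1 ≤ w) :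
    STMW 0 m w = STMW 0 (m - 1) w + STMW 0 m (w - 1) + 2 ^ (m + w) := by
  obtain ⟨M, rfl⟩ : ∃ M, m = M + 1 := ⟨m - 1, by omega⟩
  obtain ⟨W, rfl⟩ : ∃ W, w = W + 1 := ⟨w - 1, by omega⟩
  have r1 := STMW_rec1 (M + 1) W
  have key := STMW_key W M
  have e0 : M + 1 + W = M + W + 1 := by omega
  rw [e0] at r1
  simp only [Nat.add_sub_cancel]
  have hpow : (2:ℕ) ^ (M + 1 + (W + 1)) = 2 ^ (M + W + 2) := by ring_nf
  omega
end

section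
/- Positivity of the sort-together counts (the 'if' direction of the paper's Theorem 'invalidsort', in numeric form): for every finite multiset C of natural numbers all of whose elements are at least 2, (i) ST_N(C, η) ≥ 1 for every natural number η; (ii) ST_W(C, w) ≥ 1 for every w ≥ 1; (iii) ST_C(C) ≥ 1 whenever C ≠ ∅; and (iv) ST_MW(C, m, w) ≥ 1 for all m, w ≥ 1. That is, any collection consisting of nontrivial crowns together with at most one N-shaped component, or at most one W-shaped component, or at most one M-shaped component, or one M-shaped plus one W-shaped component, admits at least one scenario sorting it together. -/
lemma one_le_msum {s : Multiset ℕ} {x : ℕ} (hx : x ∈ s) (h : 1 ≤ x) : 1 ≤ s.sum :=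
  le_trans h (Multiset.single_le_sum (fun _ _ => Nat.zero_le _) x hx)

lemma STN_pos (C : Multiset ℕ) (hC : ∀ c ∈ C, 2 ≤ c) : ∀ η, 1 ≤ STN C η := by
  induction C using Multiset.strongInductionOn with
  | ih C ih =>
    intro η
    induction η with
    | zero =>
      rw [STN]
      by_cases h : C = 0
      · simp [h]
      · simp only [if_neg h]
        obtain ⟨c, hc⟩ := Multiset.exists_mem_of_ne_zero h
        have h1 : 1 ≤ 2 * c * STN (C.erase c) c := by
          have he : 1 ≤ STN (C.erase c) c :=
            ih _ (Multiset.erase_lt.mpr hc) (fun d hd => hC d (Multiset.mem_of_mem_erase hd)) c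
          have : 2 ≤ 2 * c := le_trans (hC c hc) (Nat.le_mul_of_pos_left _ (by norm_num))
          nlinarith
        exact one_le_msum (Multiset.mem_map.mpr ⟨⟨c, hc⟩, Multiset.mem_attach _ _, rfl⟩) h1
    | succ η ihη =>
      rw [STN]
      exact le_trans ihη (Nat.le_add_right _ _)

lemma STW_pos (C : Multiset ℕ) (hC : ∀ c ∈ C, 2 ≤ c) : ∀ w, 1 ≤ STW C (w + 1) := by
  induction C using Multiset.strongInductionOn with
  | ih C ih =>
    intro w
    induction w with
    | zero =>
      rw [STW]
      by_cases h : C = 0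
      · simp [h]
      · simp only [if_neg h]
        obtain ⟨c, hc⟩ := Multiset.exists_mem_of_ne_zero h
        have h1 : 1 ≤ 4 * c * STW (C.erase c) (c + 1) := by
          have he : 1 ≤ STW (C.erase c) (c + 1) :=
            ih _ (Multiset.erase_lt.mpr hc) (fun d hd => hC d (Multiset.mem_of_mem_erase hd)) c
          nlinarith [hC c hc]
        exact one_le_msum (Multiset.mem_map.mpr ⟨⟨c, hc⟩, Multiset.mem_attach _ _, rfl⟩) h1
    | succ w ihw =>
      rw [STW]
      calc 1 ≤ 2 * STW C (w + 1) := by omega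
        _ ≤ _ := Nat.le_add_right _ _

lemma STMW_pos (C : Multiset ℕ) (hC : ∀ c ∈ C, 2 ≤ c) (m w : ℕ) :
    1 ≤ STMW C (m + 1) (w + 1) := by
  rw [STMW]
  have hterm : 1 ≤ Nat.choose (C.sum + Multiset.card C + (m + 1) + (w + 1) - 1)
      ((0 : Multiset ℕ).sum + Multiset.card (0 : Multiset ℕ) + 0) *
      STN 0 0 * STN (C - 0) ((m + 1) + (w + 1) - 0 - 1) := by
    simp only [Multiset.sum_zero, Multiset.card_zero, Nat.choose_zero_right,
      Multiset.sub_zero]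
    have h0 : STN (0 : Multiset ℕ) 0 = 1 := by rw [STN]; simp
    rw [h0]
    simpa using STN_pos C hC ((m + 1) + (w + 1) - 0 - 1)
  have hpmem : (0 : Multiset ℕ) ∈ C.powerset := Multiset.mem_powerset.mpr zero_le
  have hsum : 1 ≤ (C.powerset.map (fun C' =>
        Nat.choose (C.sum + Multiset.card C + (m + 1) + (w + 1) - 1)
            (C'.sum + Multiset.card C' + 0) *
          STN C' 0 * STN (C - C') ((m + 1) + (w + 1) - 0 - 1))).sum :=
    one_le_msum (Multiset.mem_map.mpr ⟨0, hpmem, rfl⟩) hterm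
  have hrange : 1 ≤ ∑ η ∈ Finset.range (m + 1),
      4 * (C.powerset.map (fun C' =>
            Nat.choose (C.sum + Multiset.card C + (m + 1) + (w + 1) - 1)
                (C'.sum + Multiset.card C' + η) *
              STN C' η * STN (C - C') ((m + 1) + (w + 1) - η - 1))).sum := by
    refine le_trans ?_ (Finset.single_le_sum (f := fun η =>
      4 * (C.powerset.map (fun C' =>
            Nat.choose (C.sum + Multiset.card C + (m + 1) + (w + 1) - 1)
                (C'.sum + Multiset.card C' + η) *
              STN C' η * STN (C - C') ((m + 1) + (w + 1) - η - 1))).sum)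
      (fun _ _ => Nat.zero_le _) (Finset.mem_range.mpr (Nat.succ_pos m)))
    exact le_trans hsum (Nat.le_mul_of_pos_left _ (by norm_num))
  omega

/-- Positivity of the sort-together counts ('if' direction of Theorem invalidsort). -/
theorem ST_pos (C : Multiset ℕ) (hC : ∀ c ∈ C, 2 ≤ c) :
    (∀ η : ℕ, 1 ≤ STN C η) ∧
    (∀ w : ℕ, 1 ≤ w → 1 ≤ STW C w) ∧
    (C ≠ 0 → 1 ≤ STC C) ∧
    (∀ m w : ℕ, 1 ≤ m → 1 ≤ w → 1 ≤ STMW C m w) := by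
  refine ⟨STN_pos C hC, ?_, ?_, ?_⟩
  · intro w hw
    obtain ⟨w', rfl⟩ : ∃ w', w = w' + 1 := ⟨w - 1, by omega⟩
    exact STW_pos C hC w'
  · intro h
    obtain ⟨c, hc⟩ := Multiset.exists_mem_of_ne_zero h
    have hc2 := hC c hc
    have he : 1 ≤ STW (C.erase c) c := by
      obtain ⟨c', rfl⟩ : ∃ c', c = c' + 1 := ⟨c - 1, by omega⟩
      exact STW_pos _ (fun d hd => hC d (Multiset.mem_of_mem_erase hd)) c'
    have h1 : 1 ≤ c * STW (C.erase c) c := by nlinarith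
    exact one_le_msum (Multiset.mem_map.mpr ⟨c, hc, rfl⟩) h1
  · intro m w hm hw
    obtain ⟨m', rfl⟩ : ∃ m', m = m' + 1 := ⟨m - 1, by omega⟩
    obtain ⟨w', rfl⟩ : ∃ w', w = w' + 1 := ⟨w - 1, by omega⟩
    exact STMW_pos C hC m' w'
end
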